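/- arXiv:1910.14009 — 5 statements merged into one kernel-verified Lean document; each statement's English description precedes it below -/
import Mathlib

section
/- Let z be the standard Gaussian measure on ℝ and let μ ∈ [-1, 1]. Then the polynomial ξ(t) = 1 + μt + (1/2)(√(1-μ²) - 1)(1 - t²) is nonnegative on all of ℝ, satisfies ∫ ξ(t) dz(t) = 1 and ∫ t ξ(t) dz(t) = μ, and minimizes ∫ ξ(t)² dz(t) among all polynomials of degree at most 2 that are nonnegative on ℝ and satisfy these two moment constraints. -/
open MeasureTheory

namespace GaussTiltAux

open Real

lemma gaussE_integrable (n : ℕ) :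
    Integrable (fun x : ℝ => x ^ n * Real.exp (-(2⁻¹ : ℝ) * x ^ 2)) := by
  have h := integrable_rpow_mul_exp_neg_mul_sq (by norm_num : (0:ℝ) < 2⁻¹)
    (s := (n : ℝ)) (by exact_mod_cast neg_one_lt_zero.trans_le (Nat.cast_nonneg n))
  simpa [Real.rpow_natCast] using h

lemma odd_integral_zero (f : ℝ → ℝ) (hf : ∀ x, f (-x) = - f x) :
    ∫ x : ℝ, f x = 0 := by
  have h := (Measure.measurePreserving_neg (volume : Measure ℝ)).integral_comp
    (Homeomorph.neg ℝ).measurableEmbedding f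
  simp only [hf, integral_neg] at h
  linarith

lemma gaussE_I0 : ∫ x : ℝ, Real.exp (-(2⁻¹ : ℝ) * x ^ 2) = Real.sqrt (2 * π) := by
  rw [integral_gaussian]
  rw [show π / 2⁻¹ = 2 * π by ring]

lemma gaussE_rec (n : ℕ) :
    ∫ x : ℝ, x ^ (n + 2) * Real.exp (-(2⁻¹ : ℝ) * x ^ 2)
      = (n + 1 : ℝ) * ∫ x : ℝ, x ^ n * Real.exp (-(2⁻¹ : ℝ) * x ^ 2) := by
  set E : ℝ → ℝ := fun x => Real.exp (-(2⁻¹ : ℝ) * x ^ 2) with hE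
  have hu : ∀ x : ℝ, HasDerivAt (fun x : ℝ => x ^ (n + 1)) (((n : ℝ) + 1) * x ^ n) x := by
    intro x
    have := hasDerivAt_pow (n + 1) x
    simpa using this
  have hv : ∀ x : ℝ, HasDerivAt (fun x : ℝ => -E x) (x * E x) x := by
    intro x
    have h1 : HasDerivAt (fun x : ℝ => -(2⁻¹ : ℝ) * x ^ 2) (-x) x := by
      have := (hasDerivAt_pow 2 x).const_mul (-(2⁻¹ : ℝ))
      refine this.congr_deriv ?_
      push_cast
      ring
    have h2 := (h1.exp).neg
    refine h2.congr_deriv ?_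
    simp only [hE]
    ring
  have hint2 : Integrable ((fun x : ℝ => x ^ (n+1)) * fun x => x * E x) := by
    have : ((fun x : ℝ => x ^ (n+1)) * fun x => x * E x)
        = fun x => x ^ (n + 2) * E x := by
      funext x; simp [hE]; ring
    rw [this]; exact gaussE_integrable (n+2)
  have hint1 : Integrable ((fun x : ℝ => ((n : ℝ) + 1) * x ^ n) * fun x => -E x) := by
    have : ((fun x : ℝ => ((n : ℝ) + 1) * x ^ n) * fun x => -E x)
        = fun x => (-(n + 1 : ℝ)) * (x ^ n * E x) := by
      funext x; simp [hE]; ring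
    rw [this]; exact (gaussE_integrable n).const_mul _
  have hint0 : Integrable ((fun x : ℝ => x ^ (n+1)) * fun x => -E x) := by
    have : ((fun x : ℝ => x ^ (n+1)) * fun x => -E x)
        = fun x => (-1 : ℝ) * (x ^ (n+1) * E x) := by
      funext x; simp only [hE, Pi.mul_apply]; ring
    rw [this]; exact (gaussE_integrable (n+1)).const_mul _
  have key := integral_mul_deriv_eq_deriv_mul_of_integrable (fun x _ => hu x) (fun x _ => hv x) hint2 hint1 hint0
  have l1 : ∫ x : ℝ, x ^ (n+1) * (x * E x) = ∫ x : ℝ, x ^ (n + 2) * E x := by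
    congr 1; funext x; ring
  have l2 : ∫ x : ℝ, ((n : ℝ) + 1) * x ^ n * (-E x)
      = -((n + 1 : ℝ) * ∫ x : ℝ, x ^ n * E x) := by
    rw [← MeasureTheory.integral_const_mul, ← integral_neg]
    congr 1; funext x; ring
  rw [l1] at key
  rw [key, l2, neg_neg]

lemma gaussE_M0 : ∫ x : ℝ, x ^ 0 * Real.exp (-(2⁻¹ : ℝ) * x ^ 2) = Real.sqrt (2 * π) := by
  rw [show (fun x : ℝ => x ^ 0 * Real.exp (-(2⁻¹ : ℝ) * x ^ 2))
      = fun x : ℝ => Real.exp (-(2⁻¹ : ℝ) * x ^ 2) from funext fun x => by ring]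
  exact gaussE_I0

lemma gaussE_M1 : ∫ x : ℝ, x ^ 1 * Real.exp (-(2⁻¹ : ℝ) * x ^ 2) = 0 := by
  apply odd_integral_zero
  intro x
  rw [show (-x) ^ 2 = x ^ 2 from neg_sq x]
  ring

lemma gaussE_M2 : ∫ x : ℝ, x ^ 2 * Real.exp (-(2⁻¹ : ℝ) * x ^ 2) = Real.sqrt (2 * π) := by
  have := gaussE_rec 0
  rw [gaussE_M0] at this
  simpa using this

lemma gaussE_M3 : ∫ x : ℝ, x ^ 3 * Real.exp (-(2⁻¹ : ℝ) * x ^ 2) = 0 := by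
  apply odd_integral_zero
  intro x
  rw [show (-x) ^ 2 = x ^ 2 from neg_sq x]
  ring

lemma gaussE_M4 : ∫ x : ℝ, x ^ 4 * Real.exp (-(2⁻¹ : ℝ) * x ^ 2) = 3 * Real.sqrt (2 * π) := by
  have h := gaussE_rec 2
  rw [gaussE_M2] at h
  rw [show ((2:ℕ):ℝ) + 1 = 3 from by norm_num] at h
  exact h

lemma gauss_transfer (g : ℝ → ℝ) :
    ∫ t, g t ∂(ProbabilityTheory.gaussianReal 0 1)
      = (Real.sqrt (2 * π))⁻¹ * ∫ x : ℝ, g x * Real.exp (-(2⁻¹ : ℝ) * x ^ 2) := by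
  rw [ProbabilityTheory.gaussianReal_of_var_ne_zero 0 one_ne_zero]
  have hmeas : Measurable fun x : ℝ => (ProbabilityTheory.gaussianPDFReal 0 1 x).toNNReal :=
    (ProbabilityTheory.measurable_gaussianPDFReal 0 1).real_toNNReal
  have h1 : (ProbabilityTheory.gaussianPDF 0 1)
      = fun x => ((ProbabilityTheory.gaussianPDFReal 0 1 x).toNNReal : ENNReal) := rfl
  rw [h1, integral_withDensity_eq_integral_smul hmeas]
  rw [← MeasureTheory.integral_const_mul]
  congr 1
  funext x
  rw [NNReal.smul_def, smul_eq_mul,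
    Real.coe_toNNReal _ (ProbabilityTheory.gaussianPDFReal_nonneg 0 1 x)]
  have : ProbabilityTheory.gaussianPDFReal 0 1 x
      = (Real.sqrt (2 * π))⁻¹ * Real.exp (-(2⁻¹ : ℝ) * x ^ 2) := by
    rw [ProbabilityTheory.gaussianPDFReal]
    push_cast
    ring_nf
  rw [this]
  ring

lemma poly_int (p0 p1 p2 p3 p4 : ℝ) :
    ∫ t, (p0 + p1 * t + p2 * t ^ 2 + p3 * t ^ 3 + p4 * t ^ 4)
      ∂(ProbabilityTheory.gaussianReal 0 1) = p0 + p2 + 3 * p4 := by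
  rw [gauss_transfer]
  set E : ℝ → ℝ := fun x => Real.exp (-(2⁻¹ : ℝ) * x ^ 2) with hE
  have hfun : (fun x : ℝ => (p0 + p1 * x + p2 * x ^ 2 + p3 * x ^ 3 + p4 * x ^ 4) * E x)
      = fun x => p0 * (x ^ 0 * E x) + (p1 * (x ^ 1 * E x) + (p2 * (x ^ 2 * E x)
        + (p3 * (x ^ 3 * E x) + p4 * (x ^ 4 * E x)))) := by
    funext x; simp only [hE]; ring
  have i0 : Integrable (fun x : ℝ => p0 * (x ^ 0 * E x)) := (gaussE_integrable 0).const_mul _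
  have i1 : Integrable (fun x : ℝ => p1 * (x ^ 1 * E x)) := (gaussE_integrable 1).const_mul _
  have i2 : Integrable (fun x : ℝ => p2 * (x ^ 2 * E x)) := (gaussE_integrable 2).const_mul _
  have i3 : Integrable (fun x : ℝ => p3 * (x ^ 3 * E x)) := (gaussE_integrable 3).const_mul _
  have i4 : Integrable (fun x : ℝ => p4 * (x ^ 4 * E x)) := (gaussE_integrable 4).const_mul _
  have i34 : Integrable (fun x : ℝ => p3 * (x ^ 3 * E x) + p4 * (x ^ 4 * E x)) := i3.add i4
  have i234 : Integrable (fun x : ℝ => p2 * (x ^ 2 * E x)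
      + (p3 * (x ^ 3 * E x) + p4 * (x ^ 4 * E x))) := i2.add i34
  have i1234 : Integrable (fun x : ℝ => p1 * (x ^ 1 * E x) + (p2 * (x ^ 2 * E x)
      + (p3 * (x ^ 3 * E x) + p4 * (x ^ 4 * E x)))) := i1.add i234
  rw [hfun, integral_add i0 i1234, integral_add i1 i234, integral_add i2 i34,
    integral_add i3 i4]
  rw [MeasureTheory.integral_const_mul, MeasureTheory.integral_const_mul,
    MeasureTheory.integral_const_mul, MeasureTheory.integral_const_mul,
    MeasureTheory.integral_const_mul]
  rw [show (∫ x : ℝ, x ^ 0 * E x) = Real.sqrt (2 * π) from gaussE_M0,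
    show (∫ x : ℝ, x ^ 1 * E x) = 0 from gaussE_M1,
    show (∫ x : ℝ, x ^ 2 * E x) = Real.sqrt (2 * π) from gaussE_M2,
    show (∫ x : ℝ, x ^ 3 * E x) = 0 from gaussE_M3,
    show (∫ x : ℝ, x ^ 4 * E x) = 3 * Real.sqrt (2 * π) from gaussE_M4]
  have h2π : (0:ℝ) < Real.sqrt (2 * π) := Real.sqrt_pos.mpr (by positivity)
  field_simp
  ring

lemma quad_coeffs {A B C : ℝ} (h : ∀ t, 0 ≤ A + B * t + C * t ^ 2) :
    0 ≤ C ∧ B ^ 2 ≤ 4 * A * C := by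
  have hA : 0 ≤ A := by simpa using h 0
  have hC : 0 ≤ C := by
    by_contra hC
    push_neg at hC
    obtain ⟨t, ht⟩ : ∃ t : ℝ, t = Real.sqrt (A / (-C)) + 1 := ⟨_, rfl⟩
    have h1 := h t
    have h2 := h (-t)
    have hAC : 0 ≤ A / (-C) := div_nonneg hA (by linarith)
    have hsq : Real.sqrt (A / (-C)) ^ 2 = A / (-C) := Real.sq_sqrt hAC
    have hts : 0 ≤ Real.sqrt (A / (-C)) := Real.sqrt_nonneg _
    have hne : (-C) ≠ 0 := by linarith
    have hkey : C * (A / (-C)) = -A := by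
      field_simp [hC.ne]
    have ht2 : t ^ 2 = A / (-C) + 2 * Real.sqrt (A / (-C)) + 1 := by
      rw [ht]; rw [add_sq, hsq]; ring
    have hCt2 : C * t ^ 2 = -A + 2 * (C * Real.sqrt (A / (-C))) + C := by
      rw [ht2, show C * (A / (-C) + 2 * Real.sqrt (A / (-C)) + 1)
        = C * (A / (-C)) + C * (2 * Real.sqrt (A / (-C))) + C from by ring, hkey]
      ring
    have hCs : C * Real.sqrt (A / (-C)) ≤ 0 :=
      mul_nonpos_of_nonpos_of_nonneg (le_of_lt hC) hts
    have h2' : 0 ≤ A - B * t + C * t ^ 2 := by nlinarith [h2]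
    linarith [h1, h2', hCt2, hCs, hC]
  refine ⟨hC, ?_⟩
  rcases eq_or_lt_of_le hC with hC0 | hC0
  · -- C = 0 : show B = 0
    have hCz : C = 0 := hC0.symm
    by_cases hB : B = 0
    · simp [hB, hCz]
    · exfalso
      have := h (-(A + 1) / B)
      rw [hCz] at this
      have hBt : B * (-(A + 1) / B) = -(A + 1) := by field_simp
      nlinarith [this, hBt]
  · have key := h (-(B / (2 * C)))
    have h4 : 0 ≤ (A + B * (-(B / (2 * C))) + C * (-(B / (2 * C))) ^ 2) * (4 * C) :=
      mul_nonneg key (by linarith)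
    have he : (A + B * (-(B / (2 * C))) + C * (-(B / (2 * C))) ^ 2) * (4 * C)
        = 4 * A * C - B ^ 2 := by
      field_simp
      ring
    linarith [he ▸ h4]

end GaussTiltAux

/-- The explicit nonnegative quadratic PLR tilting the standard
Gaussian to mean `μ ∈ [-1,1]` satisfies the constraints and minimizes the
second moment among all nonnegative quadratics with those constraints. -/
theorem gaussian_tilt_optimal (μ : ℝ) (hμ : μ ∈ Set.Icc (-1 : ℝ) 1)
    (z : Measure ℝ) (hz : z = ProbabilityTheory.gaussianReal 0 1)
    (ξ : ℝ → ℝ)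
    (hξ : ∀ t, ξ t = 1 + μ * t + (1 / 2) * (Real.sqrt (1 - μ ^ 2) - 1) * (1 - t ^ 2)) :
    (∀ t, 0 ≤ ξ t) ∧
    (∫ t, ξ t ∂z) = 1 ∧
    (∫ t, t * ξ t ∂z) = μ ∧
    (∀ a b c : ℝ, (∀ t, 0 ≤ a + b * t + c * t ^ 2) →
      (∫ t, (a + b * t + c * t ^ 2) ∂z) = 1 →
      (∫ t, t * (a + b * t + c * t ^ 2) ∂z) = μ →
      ∫ t, (ξ t) ^ 2 ∂z ≤ ∫ t, (a + b * t + c * t ^ 2) ^ 2 ∂z) := by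
  obtain ⟨hμ1, hμ2⟩ := hμ
  set s : ℝ := Real.sqrt (1 - μ ^ 2) with hs
  have hμsq : 0 ≤ 1 - μ ^ 2 := by nlinarith
  have hs0 : 0 ≤ s := Real.sqrt_nonneg _
  have hs2 : s ^ 2 = 1 - μ ^ 2 := Real.sq_sqrt hμsq
  have hs1 : s ≤ 1 := by nlinarith
  subst hz
  -- coefficient form of ξ : ξ t = A0 + μ t + C0 t²  with A0 = (1+s)/2, C0 = (1-s)/2
  have hξ' : ∀ t, ξ t = (1 + s) / 2 + μ * t + ((1 - s) / 2) * t ^ 2 := by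
    intro t; rw [hξ t]; ring
  refine ⟨?_, ?_, ?_, ?_⟩
  · -- nonnegativity
    intro t
    rw [hξ' t]
    rcases eq_or_lt_of_le hs1 with h1 | h1
    · have hμ0 : μ = 0 := by
        have hsq0 : μ ^ 2 = 0 := by nlinarith [hs2]
        exact (pow_eq_zero_iff (Nat.succ_ne_zero 1)).mp hsq0
      rw [← h1, hμ0]
      nlinarith [sq_nonneg t]
    · nlinarith [sq_nonneg ((1 - s) * t + μ), hs2, h1, hs0]
  · -- total mass 1
    have := GaussTiltAux.poly_int ((1 + s) / 2) μ ((1 - s) / 2) 0 0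
    have hfun : (fun t : ℝ => ξ t)
        = fun t : ℝ => (1 + s) / 2 + μ * t + ((1 - s) / 2) * t ^ 2 + 0 * t ^ 3 + 0 * t ^ 4 := by
      funext t; rw [hξ' t]; ring
    rw [show (∫ t, ξ t ∂(ProbabilityTheory.gaussianReal 0 1))
        = ∫ t, ((1 + s) / 2 + μ * t + ((1 - s) / 2) * t ^ 2 + 0 * t ^ 3 + 0 * t ^ 4)
          ∂(ProbabilityTheory.gaussianReal 0 1) from by rw [← hfun], this]
    ring
  · -- mean μ
    have := GaussTiltAux.poly_int 0 ((1 + s) / 2) μ ((1 - s) / 2) 0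
    have hfun : (fun t : ℝ => t * ξ t)
        = fun t : ℝ => 0 + ((1 + s) / 2) * t + μ * t ^ 2 + ((1 - s) / 2) * t ^ 3 + 0 * t ^ 4 := by
      funext t; rw [hξ' t]; ring
    rw [show (∫ t, t * ξ t ∂(ProbabilityTheory.gaussianReal 0 1))
        = ∫ t, (0 + ((1 + s) / 2) * t + μ * t ^ 2 + ((1 - s) / 2) * t ^ 3 + 0 * t ^ 4)
          ∂(ProbabilityTheory.gaussianReal 0 1) from by rw [← hfun], this]
    ring
  · -- optimality
    intro a b c hpos hm0 hm1
    -- extract moment constraints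
    have hA : a + c = 1 := by
      have := GaussTiltAux.poly_int a b c 0 0
      have hfun : (fun t : ℝ => a + b * t + c * t ^ 2)
          = fun t : ℝ => a + b * t + c * t ^ 2 + 0 * t ^ 3 + 0 * t ^ 4 := by
        funext t; ring
      rw [show (∫ t, (a + b * t + c * t ^ 2) ∂(ProbabilityTheory.gaussianReal 0 1))
          = ∫ t, (a + b * t + c * t ^ 2 + 0 * t ^ 3 + 0 * t ^ 4)
            ∂(ProbabilityTheory.gaussianReal 0 1) from by rw [← hfun], this] at hm0
      linarith
    have hB : b = μ := by
      have := GaussTiltAux.poly_int 0 a b c 0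
      have hfun : (fun t : ℝ => t * (a + b * t + c * t ^ 2))
          = fun t : ℝ => 0 + a * t + b * t ^ 2 + c * t ^ 3 + 0 * t ^ 4 := by
        funext t; ring
      rw [show (∫ t, t * (a + b * t + c * t ^ 2) ∂(ProbabilityTheory.gaussianReal 0 1))
          = ∫ t, (0 + a * t + b * t ^ 2 + c * t ^ 3 + 0 * t ^ 4)
            ∂(ProbabilityTheory.gaussianReal 0 1) from by rw [← hfun], this] at hm1
      linarith
    obtain ⟨hC, hdisc⟩ := GaussTiltAux.quad_coeffs hpos
    -- compute both second moments
    have hL : (∫ t, (ξ t) ^ 2 ∂(ProbabilityTheory.gaussianReal 0 1))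
        = ((1 + s) / 2) ^ 2 + (μ ^ 2 + 2 * ((1 + s) / 2) * ((1 - s) / 2))
          + 3 * ((1 - s) / 2) ^ 2 := by
      have := GaussTiltAux.poly_int (((1 + s) / 2) ^ 2) (2 * ((1 + s) / 2) * μ)
        (μ ^ 2 + 2 * ((1 + s) / 2) * ((1 - s) / 2)) (2 * μ * ((1 - s) / 2)) (((1 - s) / 2) ^ 2)
      have hfun : (fun t : ℝ => (ξ t) ^ 2)
          = fun t : ℝ => ((1 + s) / 2) ^ 2 + (2 * ((1 + s) / 2) * μ) * t
            + (μ ^ 2 + 2 * ((1 + s) / 2) * ((1 - s) / 2)) * t ^ 2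
            + (2 * μ * ((1 - s) / 2)) * t ^ 3 + (((1 - s) / 2) ^ 2) * t ^ 4 := by
        funext t; rw [hξ' t]; ring
      rw [show (∫ t, (ξ t) ^ 2 ∂(ProbabilityTheory.gaussianReal 0 1))
          = ∫ t, (((1 + s) / 2) ^ 2 + (2 * ((1 + s) / 2) * μ) * t
            + (μ ^ 2 + 2 * ((1 + s) / 2) * ((1 - s) / 2)) * t ^ 2
            + (2 * μ * ((1 - s) / 2)) * t ^ 3 + (((1 - s) / 2) ^ 2) * t ^ 4)
            ∂(ProbabilityTheory.gaussianReal 0 1) from by rw [← hfun], this]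
    have hR : (∫ t, (a + b * t + c * t ^ 2) ^ 2 ∂(ProbabilityTheory.gaussianReal 0 1))
        = a ^ 2 + (b ^ 2 + 2 * a * c) + 3 * c ^ 2 := by
      have := GaussTiltAux.poly_int (a ^ 2) (2 * a * b) (b ^ 2 + 2 * a * c) (2 * b * c) (c ^ 2)
      have hfun : (fun t : ℝ => (a + b * t + c * t ^ 2) ^ 2)
          = fun t : ℝ => a ^ 2 + (2 * a * b) * t + (b ^ 2 + 2 * a * c) * t ^ 2
            + (2 * b * c) * t ^ 3 + (c ^ 2) * t ^ 4 := by
        funext t; ring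
      rw [show (∫ t, (a + b * t + c * t ^ 2) ^ 2 ∂(ProbabilityTheory.gaussianReal 0 1))
          = ∫ t, (a ^ 2 + (2 * a * b) * t + (b ^ 2 + 2 * a * c) * t ^ 2
            + (2 * b * c) * t ^ 3 + (c ^ 2) * t ^ 4)
            ∂(ProbabilityTheory.gaussianReal 0 1) from by rw [← hfun], this]
    rw [hL, hR]
    -- algebraic inequality
    have ha : a = 1 - c := by linarith
    subst ha hB
    have hkey : 1 - s ≤ 2 * c := by
      nlinarith [hdisc, hs2, hs0, hC, sq_nonneg (s - (1 - 2 * c)), sq_nonneg (s + (1 - 2 * c))]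
    have hsq : (1 - s) * (1 - s) ≤ (2 * c) * (2 * c) :=
      mul_le_mul hkey hkey (by linarith) (by linarith)
    nlinarith [hsq, hs2, hs1, hC]
end

section
/- Let z be the standard Gaussian measure on ℝ and μ ∈ ℝ. There exists a polynomial ξ of degree at most 2 that is nonnegative on ℝ and satisfies ∫ ξ dz = 1 and ∫ t ξ dz = μ if and only if -1 ≤ μ ≤ 1. -/
open MeasureTheory Real ProbabilityTheory

lemma gt_int_mono (n : ℕ) : Integrable (fun x : ℝ => x ^ n * rexp (-(1/2) * x ^ 2)) := by
  have h := integrable_rpow_mul_exp_neg_mul_sq (b := 1/2) (by norm_num) (s := (n : ℝ))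
    (lt_of_lt_of_le (by norm_num) (Nat.cast_nonneg n))
  simpa [Real.rpow_natCast] using h

lemma gt_pdf_eq (x : ℝ) :
    gaussianPDFReal 0 1 x = (√(2 * π))⁻¹ * rexp (-(1/2) * x ^ 2) := by
  unfold gaussianPDFReal
  norm_num
  left
  ring_nf

lemma gt_transfer (g : ℝ → ℝ) :
    ∫ x, g x ∂(gaussianReal 0 1) = ∫ x, gaussianPDFReal 0 1 x * g x := by
  rw [gaussianReal_of_var_ne_zero _ one_ne_zero]
  have : gaussianPDF 0 1 = fun x => ((gaussianPDFReal 0 1 x).toNNReal : ENNReal) := by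
    ext x; simp [gaussianPDF, ENNReal.ofReal]
  rw [this, integral_withDensity_eq_integral_smul
    (by exact (measurable_gaussianPDFReal 0 1).real_toNNReal) g]
  congr 1
  ext x
  simp [NNReal.smul_def, Real.coe_toNNReal _ (gaussianPDFReal_nonneg 0 1 x)]

lemma gt_integrable_iff (g : ℝ → ℝ) :
    Integrable g (gaussianReal 0 1) ↔ Integrable (fun x => gaussianPDFReal 0 1 x * g x) := by
  rw [gaussianReal_of_var_ne_zero _ one_ne_zero]
  have : gaussianPDF 0 1 = fun x => ((gaussianPDFReal 0 1 x).toNNReal : ENNReal) := by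
    ext x; simp [gaussianPDF, ENNReal.ofReal]
  rw [this, integrable_withDensity_iff_integrable_smul
    (by exact (measurable_gaussianPDFReal 0 1).real_toNNReal)]
  constructor <;> intro h <;> [skip; skip] <;>
    · apply h.congr
      filter_upwards with x
      simp [NNReal.smul_def, Real.coe_toNNReal _ (gaussianPDFReal_nonneg 0 1 x)]

lemma gt_int_z (n : ℕ) : Integrable (fun t : ℝ => t ^ n) (gaussianReal 0 1) := by
  rw [gt_integrable_iff]
  have := ((gt_int_mono n).const_mul (√(2 * π))⁻¹)
  apply this.congr
  filter_upwards with x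
  rw [gt_pdf_eq]
  ring

lemma gt_J0 : (∫ x : ℝ, rexp (-(1/2) * x ^ 2)) = √(2 * π) := by
  rw [integral_gaussian]
  congr 1
  field_simp

lemma gt_Jodd (n : ℕ) (hn : Odd n) : (∫ x : ℝ, x ^ n * rexp (-(1/2) * x ^ 2)) = 0 := by
  have h := integral_neg_eq_self (fun x : ℝ => x ^ n * rexp (-(1/2) * x ^ 2)) volume
  have h2 : (∫ x : ℝ, (-x) ^ n * rexp (-(1/2) * (-x) ^ 2))
      = ∫ x : ℝ, -(x ^ n * rexp (-(1/2) * x ^ 2)) := by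
    congr 1; ext x; rw [hn.neg_pow]; ring_nf
  rw [h2, integral_neg] at h
  linarith

lemma gt_J2 : (∫ x : ℝ, x ^ 2 * rexp (-(1/2) * x ^ 2)) = √(2 * π) := by
  have hu : ∀ x : ℝ, HasDerivAt (fun y : ℝ => y) 1 x := fun x => hasDerivAt_id x
  have hv : ∀ x : ℝ, HasDerivAt (fun y : ℝ => rexp (-(1/2) * y ^ 2))
      (rexp (-(1/2) * x ^ 2) * (-x)) x := by
    intro x
    have h1 : HasDerivAt (fun y : ℝ => -(1/2 : ℝ) * y ^ 2) (-x) x := by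
      have := (hasDerivAt_pow 2 x).const_mul (-(1/2) : ℝ)
      simpa using this.congr_deriv (by ring)
    simpa using h1.exp
  have key := integral_mul_deriv_eq_deriv_mul_of_integrable
    (u := fun y : ℝ => y) (v := fun y : ℝ => rexp (-(1/2) * y ^ 2))
    (u' := fun _ => 1) (v' := fun x => rexp (-(1/2) * x ^ 2) * (-x))
    (fun x _ => hu x) (fun x _ => hv x)
    (by
      have := (gt_int_mono 2).neg
      apply this.congr; filter_upwards with x; simp [Pi.mul_apply]; ring)
    (by
      have := gt_int_mono 0
      apply this.congr; filter_upwards with x; simp [Pi.mul_apply])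
    (by
      have := gt_int_mono 1
      apply this.congr; filter_upwards with x; simp [Pi.mul_apply])
  have e1 : (∫ x : ℝ, x * (rexp (-(1/2) * x ^ 2) * (-x)))
      = -∫ x : ℝ, x ^ 2 * rexp (-(1/2) * x ^ 2) := by
    rw [← integral_neg]; congr 1; ext x; ring
  have e2 : (∫ x : ℝ, (1 : ℝ) * rexp (-(1/2) * x ^ 2)) = √(2 * π) := by
    simp only [one_mul]; exact gt_J0
  rw [e1, e2] at key
  linarith

lemma gt_Mn (n : ℕ) : (∫ t : ℝ, t ^ n ∂(gaussianReal 0 1))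
    = (√(2 * π))⁻¹ * ∫ x : ℝ, x ^ n * rexp (-(1/2) * x ^ 2) := by
  rw [gt_transfer, ← integral_const_mul]
  congr 1; ext x; rw [gt_pdf_eq]; ring

lemma gt_M0 : (∫ t : ℝ, (1 : ℝ) ∂(gaussianReal 0 1)) = 1 := by simp

lemma gt_M1 : (∫ t : ℝ, t ∂(gaussianReal 0 1)) = 0 := by
  have h1 : (∫ t : ℝ, t ∂(gaussianReal 0 1)) = ∫ t : ℝ, t ^ 1 ∂(gaussianReal 0 1) := by
    simp
  rw [h1, gt_Mn 1, gt_Jodd 1 odd_one, mul_zero]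

lemma gt_M2 : (∫ t : ℝ, t ^ 2 ∂(gaussianReal 0 1)) = 1 := by
  rw [gt_Mn 2, gt_J2]
  rw [inv_mul_cancel₀]
  positivity

lemma gt_M3 : (∫ t : ℝ, t ^ 3 ∂(gaussianReal 0 1)) = 0 := by
  rw [gt_Mn 3, gt_Jodd 3 (by decide), mul_zero]

lemma gt_split1 (a b c : ℝ) :
    (∫ t, (a + b * t + c * t ^ 2) ∂(gaussianReal 0 1)) = a + c := by
  have i0 : Integrable (fun _ : ℝ => a) (gaussianReal 0 1) := integrable_const a
  have i1 : Integrable (fun t : ℝ => b * t) (gaussianReal 0 1) := by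
    simpa using (gt_int_z 1).const_mul b
  have i2 : Integrable (fun t : ℝ => c * t ^ 2) (gaussianReal 0 1) :=
    (gt_int_z 2).const_mul c
  have i01 : Integrable (fun t : ℝ => a + b * t) (gaussianReal 0 1) := i0.add i1
  rw [integral_add i01 i2, integral_add i0 i1, integral_const,
    integral_const_mul, integral_const_mul, gt_M1, gt_M2]
  simp

lemma gt_split2 (a b c : ℝ) :
    (∫ t, t * (a + b * t + c * t ^ 2) ∂(gaussianReal 0 1)) = b := by
  have i1 : Integrable (fun t : ℝ => a * t) (gaussianReal 0 1) := by
    simpa using (gt_int_z 1).const_mul a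
  have i2 : Integrable (fun t : ℝ => b * t ^ 2) (gaussianReal 0 1) :=
    (gt_int_z 2).const_mul b
  have i3 : Integrable (fun t : ℝ => c * t ^ 3) (gaussianReal 0 1) :=
    (gt_int_z 3).const_mul c
  have heq : (∫ t, t * (a + b * t + c * t ^ 2) ∂(gaussianReal 0 1))
      = ∫ t, (a * t + b * t ^ 2 + c * t ^ 3) ∂(gaussianReal 0 1) := by
    congr 1; ext t; ring
  have i12 : Integrable (fun t : ℝ => a * t + b * t ^ 2) (gaussianReal 0 1) := i1.add i2
  rw [heq, integral_add i12 i3, integral_add i1 i2,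
    integral_const_mul, integral_const_mul, integral_const_mul, gt_M1, gt_M2, gt_M3]
  ring


/-- Feasibility of the constrained quadratic Gaussian tilting
problem holds if and only if `-1 ≤ μ ≤ 1`. -/
theorem gaussian_tilt_feasibility (μ : ℝ)
    (z : Measure ℝ) (hz : z = ProbabilityTheory.gaussianReal 0 1) :
    (∃ a b c : ℝ, (∀ t : ℝ, 0 ≤ a + b * t + c * t ^ 2) ∧
      (∫ t, (a + b * t + c * t ^ 2) ∂z) = 1 ∧
      (∫ t, t * (a + b * t + c * t ^ 2) ∂z) = μ) ↔ (-1 ≤ μ ∧ μ ≤ 1) := by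
  subst hz
  constructor
  · rintro ⟨a, b, c, hnn, h1, h2⟩
    rw [gt_split1] at h1
    rw [gt_split2] at h2
    have hd : discrim c b a ≤ 0 := by
      apply discrim_le_zero
      intro x
      have := hnn x
      nlinarith [this]
    rw [discrim] at hd
    constructor <;> nlinarith [sq_nonneg (a - c), hd, h1, h2]
  · rintro ⟨h1, h2⟩
    refine ⟨1/2, μ, 1/2, fun t => ?_, ?_, ?_⟩
    · nlinarith [sq_nonneg (t + μ), mul_nonneg (by linarith : (0:ℝ) ≤ 1 - μ) (by linarith : (0:ℝ) ≤ 1 + μ)]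
    · rw [gt_split1]; norm_num
    · rw [gt_split2]
end

section
/- A polynomial ξ of degree at most 2n in one real variable is nonnegative on [0, ∞) if and only if there exist polynomials f (a sum of two squares of polynomials of degree ≤ n) and g (a sum of two squares of polynomials of degree ≤ n-1) such that ξ(t) = f(t) + t·g(t) for all t. -/
open Polynomial

/-- nonneg on complement of a point implies nonneg everywhere, for polynomials. -/
lemma nonneg_of_nonneg_compl {Q : Polynomial ℝ} {r : ℝ}
    (h : ∀ x, x ≠ r → 0 ≤ Q.eval x) : ∀ x, 0 ≤ Q.eval x := by
  have hc : IsClosed {x : ℝ | 0 ≤ Q.eval x} :=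
    isClosed_le continuous_const Q.continuous
  have hsub : ({r}ᶜ : Set ℝ) ⊆ {x : ℝ | 0 ≤ Q.eval x} := fun x hx => h x hx
  intro x
  exact (hc.closure_subset_iff.mpr hsub) (dense_compl_singleton r x)

/-- A real polynomial nonnegative on ℝ is a sum of two squares, with degree bounds. -/
lemma sos_aux : ∀ (d : ℕ) (P : Polynomial ℝ), P.natDegree ≤ d →
    (∀ x, 0 ≤ P.eval x) → ∀ m, P.natDegree ≤ 2 * m →
    ∃ f g : Polynomial ℝ, f.natDegree ≤ m ∧ g.natDegree ≤ m ∧ P = f ^ 2 + g ^ 2 := by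
  intro d
  induction d with
  | zero =>
    intro P hd h m _
    have hP : P = C (P.coeff 0) := Polynomial.eq_C_of_natDegree_le_zero hd
    have h0 : 0 ≤ P.coeff 0 := by have := h 0; rwa [hP, eval_C] at this
    refine ⟨C (Real.sqrt (P.coeff 0)), 0, by simp, by simp, ?_⟩
    conv_lhs => rw [hP]
    rw [← C_pow, Real.sq_sqrt h0]
    simp
  | succ d ih =>
    intro P hd h m hm
    rcases le_or_gt P.natDegree d with hle | hgt
    · exact ih P hle h m hm
    have hdeg : P.natDegree = d + 1 := le_antisymm hd hgt
    have hP0 : P ≠ 0 := fun h0 => by rw [h0] at hgt; simp at hgt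
    have hdegpos : 0 < (P.map (algebraMap ℝ ℂ)).degree := by
      rw [Polynomial.degree_map]
      exact Polynomial.natDegree_pos_iff_degree_pos.mp (by omega)
    obtain ⟨z, hz⟩ := Complex.exists_root hdegpos
    -- get a monic real quadratic q with q ∣ P and eval nonneg, positive off possibly one point
    by_cases him : z.im = 0
    · -- real root r = z.re
      set r := z.re with hr
      have hzr : (z : ℂ) = (r : ℂ) := by
        apply Complex.ext <;> simp [hr, him]
      have hroot : P.IsRoot r := by
        have h1 : (P.map (algebraMap ℝ ℂ)).eval (r : ℂ) = 0 := by rw [← hzr]; exact hz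
        have h2 : ((P.eval r : ℝ) : ℂ) = 0 := by
          rw [← h1, Polynomial.eval_map,
            show ((r : ℝ) : ℂ) = algebraMap ℝ ℂ r from rfl, Polynomial.eval₂_at_apply]
          rfl
        exact Complex.ofReal_eq_zero.mp h2
      obtain ⟨Q1, hQ1⟩ := (Polynomial.dvd_iff_isRoot).mpr hroot
      -- r is a local min so derivative vanishes there
      have hmin : IsLocalMin (fun x => P.eval x) r :=
        Filter.Eventually.of_forall (fun x => by
          simpa [hroot.eq_zero] using h x)
      have hderiv : P.derivative.eval r = 0 := by
        have := hmin.deriv_eq_zero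
        rwa [Polynomial.deriv] at this
      have hQ1r : Q1.IsRoot r := by
        have : P.derivative = Q1 + (X - C r) * Q1.derivative := by
          rw [hQ1, Polynomial.derivative_mul]
          simp [mul_comm]
        have h2 := congrArg (Polynomial.eval r) this
        simpa [hderiv] using h2.symm
      obtain ⟨Q, hQ⟩ := (Polynomial.dvd_iff_isRoot).mpr hQ1r
      have hPQ : P = (X - C r) ^ 2 * Q := by rw [hQ1, hQ]; ring
      have hQne : Q ≠ 0 := fun h0 => hP0 (by rw [hPQ, h0, mul_zero])
      have hqne : ((X : Polynomial ℝ) - C r) ^ 2 ≠ 0 := pow_ne_zero _ (X_sub_C_ne_zero r)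
      have hnd : P.natDegree = 2 + Q.natDegree := by
        rw [hPQ, Polynomial.natDegree_mul hqne hQne]
        congr 1
        simp [Polynomial.natDegree_pow]
      have hm1 : 1 ≤ m := by omega
      have hQnn : ∀ x, 0 ≤ Q.eval x := by
        apply nonneg_of_nonneg_compl (r := r)
        intro x hx
        have hxr : x - r ≠ 0 := sub_ne_zero.mpr hx
        have hpos : 0 < (x - r) ^ 2 := by positivity
        have hx2 := h x
        rw [hPQ] at hx2
        simp only [Polynomial.eval_mul, Polynomial.eval_pow, Polynomial.eval_sub,
          Polynomial.eval_X, Polynomial.eval_C] at hx2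
        nlinarith
      obtain ⟨f, g, hf, hg, hfg⟩ := ih Q (by omega) hQnn (m - 1) (by omega)
      refine ⟨(X - C r) * f, (X - C r) * g, ?_, ?_, ?_⟩
      · calc ((X - C r) * f).natDegree ≤ (X - C r).natDegree + f.natDegree :=
            Polynomial.natDegree_mul_le
          _ ≤ 1 + (m - 1) := by
            have := Polynomial.natDegree_X_sub_C r
            omega
          _ ≤ m := by omega
      · calc ((X - C r) * g).natDegree ≤ (X - C r).natDegree + g.natDegree :=
            Polynomial.natDegree_mul_le
          _ ≤ 1 + (m - 1) := by
            have := Polynomial.natDegree_X_sub_C r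
            omega
          _ ≤ m := by omega
      · rw [hPQ, hfg]; ring
    · -- complex root, quadratic factor
      have haeval : Polynomial.aeval z P = 0 := by
        rw [Polynomial.aeval_def, ← Polynomial.eval_map]; exact hz
      obtain ⟨Q, hQ⟩ := P.quadratic_dvd_of_aeval_eq_zero_im_ne_zero haeval him
      set q : Polynomial ℝ := X ^ 2 - C (2 * z.re) * X + C (‖z‖ ^ 2) with hqdef
      have hnormsq : ‖z‖ ^ 2 = z.re ^ 2 + z.im ^ 2 := by
        rw [Complex.sq_norm, Complex.normSq_apply]; ring
      have hq2 : q = (X - C z.re) ^ 2 + (C z.im) ^ 2 := by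
        rw [hqdef, hnormsq]
        simp only [C_add, C_pow, C_mul, map_ofNat]
        ring
      have hqeval : ∀ x : ℝ, q.eval x = (x - z.re) ^ 2 + z.im ^ 2 := by
        intro x
        rw [hq2]
        simp
      have hqpos : ∀ x : ℝ, 0 < q.eval x := by
        intro x
        rw [hqeval]
        have : 0 < z.im ^ 2 := by positivity
        nlinarith [sq_nonneg (x - z.re)]
      have hqdeg : q.natDegree = 2 := by
        have : q = C 1 * X ^ 2 + C (-(2 * z.re)) * X + C (‖z‖ ^ 2) := by
          rw [hqdef]; simp only [map_neg, C_1]; ring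
        rw [this]
        exact Polynomial.natDegree_quadratic one_ne_zero
      have hqne : q ≠ 0 := fun h0 => by have := hqpos 0; rw [h0] at this; simp at this
      have hQne : Q ≠ 0 := fun h0 => hP0 (by rw [hQ, h0, mul_zero])
      have hnd : P.natDegree = 2 + Q.natDegree := by
        rw [hQ, Polynomial.natDegree_mul hqne hQne, hqdeg]
      have hm1 : 1 ≤ m := by omega
      have hQnn : ∀ x, 0 ≤ Q.eval x := by
        intro x
        have hx2 := h x
        rw [hQ, Polynomial.eval_mul] at hx2
        nlinarith [hqpos x]
      obtain ⟨f, g, hf, hg, hfg⟩ := ih Q (by omega) hQnn (m - 1) (by omega)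
      refine ⟨(X - C z.re) * f - C z.im * g, C z.im * f + (X - C z.re) * g, ?_, ?_, ?_⟩
      · calc ((X - C z.re) * f - C z.im * g).natDegree ≤
            max ((X - C z.re) * f).natDegree ((C z.im) * g).natDegree :=
            Polynomial.natDegree_sub_le _ _
          _ ≤ m := by
            apply max_le
            · calc ((X - C z.re) * f).natDegree ≤ (X - C z.re).natDegree + f.natDegree :=
                  Polynomial.natDegree_mul_le
                _ ≤ m := by have := Polynomial.natDegree_X_sub_C z.re; omega
            · calc (C z.im * g).natDegree ≤ (C z.im).natDegree + g.natDegree :=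
                  Polynomial.natDegree_mul_le
                _ ≤ m := by have : (C z.im).natDegree = 0 := Polynomial.natDegree_C _; omega
      · calc (C z.im * f + (X - C z.re) * g).natDegree ≤
            max (C z.im * f).natDegree ((X - C z.re) * g).natDegree :=
            Polynomial.natDegree_add_le _ _
          _ ≤ m := by
            apply max_le
            · calc (C z.im * f).natDegree ≤ (C z.im).natDegree + f.natDegree :=
                  Polynomial.natDegree_mul_le
                _ ≤ m := by have : (C z.im).natDegree = 0 := Polynomial.natDegree_C _; omega
            · calc ((X - C z.re) * g).natDegree ≤ (X - C z.re).natDegree + g.natDegree :=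
                  Polynomial.natDegree_mul_le
                _ ≤ m := by have := Polynomial.natDegree_X_sub_C z.re; omega
      · rw [hQ, hq2, hfg]; ring

lemma evenOdd_sum (a : ℕ → ℝ) (x : ℝ) :
    ∀ N : ℕ, ∑ i ∈ Finset.range (2 * N), a i * x ^ i =
      (∑ i ∈ Finset.range N, a (2 * i) * (x ^ 2) ^ i) +
        x * ∑ i ∈ Finset.range N, a (2 * i + 1) * (x ^ 2) ^ i := by
  intro N
  induction N with
  | zero => simp
  | succ N ihN =>
    rw [show 2 * (N + 1) = 2 * N + 1 + 1 by ring, Finset.sum_range_succ, Finset.sum_range_succ,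
      ihN, Finset.sum_range_succ, Finset.sum_range_succ]
    ring

/-- Even part of a polynomial, truncated. -/
noncomputable def evenPart (A : Polynomial ℝ) (n : ℕ) : Polynomial ℝ :=
  ∑ i ∈ Finset.range (n + 1), Polynomial.C (A.coeff (2 * i)) * Polynomial.X ^ i

/-- Odd part of a polynomial, truncated. -/
noncomputable def oddPart (A : Polynomial ℝ) (n : ℕ) : Polynomial ℝ :=
  ∑ i ∈ Finset.range n, Polynomial.C (A.coeff (2 * i + 1)) * Polynomial.X ^ i

lemma evenPart_natDegree (A : Polynomial ℝ) (n : ℕ) : (evenPart A n).natDegree ≤ n := by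
  apply Polynomial.natDegree_sum_le_of_forall_le
  intro i hi
  exact le_trans (Polynomial.natDegree_C_mul_X_pow_le _ _)
    (Nat.lt_succ_iff.mp (Finset.mem_range.mp hi))

lemma oddPart_natDegree (A : Polynomial ℝ) (n : ℕ) : (oddPart A n).natDegree ≤ n - 1 := by
  apply Polynomial.natDegree_sum_le_of_forall_le
  intro i hi
  exact le_trans (Polynomial.natDegree_C_mul_X_pow_le _ _)
    (by have := Finset.mem_range.mp hi; omega)

lemma evenOdd_decomp (A : Polynomial ℝ) (n : ℕ) (hA : A.natDegree ≤ 2 * n) (x : ℝ) :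
    A.eval x = (evenPart A n).eval (x ^ 2) + x * (oddPart A n).eval (x ^ 2) := by
  have h1 : A.eval x = ∑ i ∈ Finset.range (2 * (n + 1)), A.coeff i * x ^ i :=
    Polynomial.eval_eq_sum_range' (by omega) x
  rw [h1, evenOdd_sum]
  have htop : A.coeff (2 * n + 1) = 0 :=
    Polynomial.coeff_eq_zero_of_natDegree_lt (by omega)
  rw [Finset.sum_range_succ (fun i => A.coeff (2 * i + 1) * (x ^ 2) ^ i) n, htop]
  simp [evenPart, oddPart, Polynomial.eval_finset_sum]

/-- A univariate real polynomial of degree ≤ 2n is nonnegative on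
[0,∞) iff ξ(t) = f(t) + t·g(t) where f is a sum of two squares of degree-≤n
polynomials and g a sum of two squares of degree-≤(n-1) polynomials. -/
theorem nonneg_halfline_even (n : ℕ) (ξ : Polynomial ℝ)
    (hdeg : ξ.natDegree ≤ 2 * n) :
    (∀ t : ℝ, 0 ≤ t → 0 ≤ ξ.eval t) ↔
      ∃ p q r s : Polynomial ℝ,
        p.natDegree ≤ n ∧ q.natDegree ≤ n ∧
        r.natDegree ≤ n - 1 ∧ s.natDegree ≤ n - 1 ∧
        ∀ t : ℝ, ξ.eval t =
          (p.eval t) ^ 2 + (q.eval t) ^ 2 + t * ((r.eval t) ^ 2 + (s.eval t) ^ 2) := by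
  constructor
  · intro h
    -- the substituted polynomial η(x) = ξ(x²) is nonnegative on ℝ
    set η : Polynomial ℝ := ξ.comp (Polynomial.X ^ 2) with hη
    have hηeval : ∀ x : ℝ, η.eval x = ξ.eval (x ^ 2) := by
      intro x; rw [hη, Polynomial.eval_comp]; simp
    have hηnn : ∀ x : ℝ, 0 ≤ η.eval x := fun x => by
      rw [hηeval]; exact h _ (sq_nonneg x)
    have hηdeg : η.natDegree ≤ 2 * (2 * n) := by
      rw [hη, Polynomial.natDegree_comp]
      have : (Polynomial.X ^ 2 : Polynomial ℝ).natDegree = 2 := by simp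
      rw [this]; omega
    obtain ⟨A, B, hAdeg, hBdeg, hAB⟩ := sos_aux η.natDegree η le_rfl hηnn (2 * n) hηdeg
    set Ae := evenPart A n; set Ao := oddPart A n
    set Be := evenPart B n; set Bo := oddPart B n
    -- the two polynomials agree on [0, ∞), hence are equal
    have key : ∀ t : ℝ, 0 ≤ t → ξ.eval t =
        (Ae ^ 2 + Be ^ 2 + Polynomial.X * (Ao ^ 2 + Bo ^ 2)).eval t := by
      intro t ht
      set x := Real.sqrt t with hxdef
      have hx2 : x ^ 2 = t := Real.sq_sqrt ht
      have e1 : ξ.eval (x ^ 2) = (A.eval x) ^ 2 + (B.eval x) ^ 2 := by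
        rw [← hηeval, hAB]; simp
      have e2 : ξ.eval (x ^ 2) = (A.eval (-x)) ^ 2 + (B.eval (-x)) ^ 2 := by
        rw [show x ^ 2 = (-x) ^ 2 by ring, ← hηeval, hAB]; simp
      rw [evenOdd_decomp A n hAdeg x, evenOdd_decomp B n hBdeg x] at e1
      rw [evenOdd_decomp A n hAdeg (-x), evenOdd_decomp B n hBdeg (-x), neg_sq] at e2
      rw [← hx2]
      simp only [Polynomial.eval_add, Polynomial.eval_mul, Polynomial.eval_pow,
        Polynomial.eval_X]
      linear_combination e1 / 2 + e2 / 2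
    have hpoly : ξ = Ae ^ 2 + Be ^ 2 + Polynomial.X * (Ao ^ 2 + Bo ^ 2) := by
      apply Polynomial.eq_of_infinite_eval_eq
      apply Set.Infinite.mono (s := Set.Ici (0 : ℝ))
      · intro t ht; exact key t ht
      · exact Set.Ici_infinite 0
    refine ⟨Ae, Be, Ao, Bo, evenPart_natDegree A n, evenPart_natDegree B n,
      oddPart_natDegree A n, oddPart_natDegree B n, ?_⟩
    intro t
    rw [hpoly]
    simp
  · rintro ⟨p, q, r, s, _, _, _, _, he⟩ t ht
    rw [he t]
    have h1 : 0 ≤ (r.eval t) ^ 2 + (s.eval t) ^ 2 := by positivity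
    nlinarith [sq_nonneg (p.eval t), sq_nonneg (q.eval t), mul_nonneg ht h1]
end

section
/- Let a < b be real numbers. A polynomial ξ of degree at most 2n+1 is nonnegative on [a, b] if and only if there exist polynomials f, g, each a sum of two squares of polynomials of degree ≤ n, such that ξ(t) = (b - t)·f(t) + (t - a)·g(t) for all t. -/
open Polynomial Filter Set


lemma eval_nonneg_of_closure {η : Polynomial ℝ} {s : Set ℝ} {r : ℝ}
    (hs : ∀ t ∈ s, 0 ≤ η.eval t) (hr : r ∈ closure s) : 0 ≤ η.eval r := by
  have hne : (nhdsWithin r s).NeBot := mem_closure_iff_nhdsWithin_neBot.mp hr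
  exact ge_of_tendsto (η.continuousWithinAt (s := s) (a := r))
    (eventually_nhdsWithin_of_forall hs)

lemma sq_dvd_of_root_of_deriv_root {ξ : Polynomial ℝ} {r : ℝ}
    (h0 : ξ.IsRoot r) (h1 : ξ.derivative.IsRoot r) : (X - C r) ^ 2 ∣ ξ := by
  obtain ⟨η₁, hη₁⟩ := dvd_iff_isRoot.mpr h0
  have hd : ξ.derivative = η₁ + (X - C r) * η₁.derivative := by
    rw [hη₁, derivative_mul]; simp
  have h2 : η₁.IsRoot r := by
    have := h1
    rw [hd] at this
    simpa [IsRoot, eval_add, eval_mul] using this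
  obtain ⟨η, hη⟩ := dvd_iff_isRoot.mpr h2
  exact ⟨η, by rw [hη₁, hη]; ring⟩

lemma deriv_root_of_isLocalMin {ξ : Polynomial ℝ} {r : ℝ}
    (h : IsLocalMin (fun x => ξ.eval x) r) : ξ.derivative.IsRoot r := by
  have := h.deriv_eq_zero
  rwa [Polynomial.deriv] at this

lemma quad_pos (z : ℂ) (him : z.im ≠ 0) (t : ℝ) :
    0 < (X ^ 2 - C (2 * z.re) * X + C (‖z‖ ^ 2) : Polynomial ℝ).eval t := by
  have h : ‖z‖ ^ 2 = z.re ^ 2 + z.im ^ 2 := by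
    rw [Complex.sq_norm, Complex.normSq_apply]; ring
  have him2 : 0 < z.im ^ 2 := by positivity
  simp only [eval_add, eval_sub, eval_mul, eval_pow, eval_X, eval_C]
  nlinarith [sq_nonneg (t - z.re)]

lemma exists_sq_add_sq : ∀ (d : ℕ) (u : Polynomial ℝ), u.natDegree ≤ d →
    (∀ x : ℝ, 0 ≤ u.eval x) → ∃ p q : Polynomial ℝ, u = p ^ 2 + q ^ 2 := by
  have const : ∀ u : Polynomial ℝ, u.natDegree = 0 → (∀ x : ℝ, 0 ≤ u.eval x) →
      ∃ p q : Polynomial ℝ, u = p ^ 2 + q ^ 2 := by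
    intro u h0 hu
    have hc : u = C (u.coeff 0) := eq_C_of_natDegree_le_zero h0.le
    have h0' : 0 ≤ u.coeff 0 := by
      have := hu 0
      rw [hc] at this; simpa using this
    refine ⟨C (Real.sqrt (u.coeff 0)), 0, ?_⟩
    rw [← C_pow, Real.sq_sqrt h0']
    simpa using hc
  intro d
  induction d with
  | zero => exact fun u hd => const u (Nat.le_zero.mp hd)
  | succ d ih =>
    intro u hd hu
    by_cases h0 : u.natDegree = 0
    · exact const u h0 hu
    · have hu0 : u ≠ 0 := fun h => h0 (by simp [h])
      have hdegpos : u.degree ≠ 0 := by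
        rw [degree_eq_natDegree hu0]
        exact_mod_cast h0
      obtain ⟨z, hz⟩ := IsAlgClosed.exists_aeval_eq_zero ℂ u hdegpos
      by_cases him : z.im = 0
      · lift z to ℝ using him
        erw [aeval_ofReal, RCLike.ofReal_eq_zero] at hz
        have hroot : u.IsRoot z := hz
        have hmin : IsLocalMin (fun x => u.eval x) z :=
          Filter.Eventually.of_forall (fun x => by
            simpa [hroot.eq_zero] using hu x)
        obtain ⟨η, hfac⟩ := sq_dvd_of_root_of_deriv_root hroot
          (deriv_root_of_isLocalMin hmin)
        have hXne : ((X - C z : Polynomial ℝ)) ^ 2 ≠ 0 := pow_ne_zero _ (X_sub_C_ne_zero z)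
        have hηne : η ≠ 0 := by rintro rfl; rw [mul_zero] at hfac; exact hu0 hfac
        have hdeg : η.natDegree + 2 = u.natDegree := by
          rw [hfac, natDegree_mul hXne hηne, natDegree_pow, natDegree_X_sub_C]; ring
        have hηnn : ∀ x, 0 ≤ η.eval x := by
          have haux : ∀ t : ℝ, t ≠ z → 0 ≤ η.eval t := by
            intro t ht
            have h2 : 0 ≤ (t - z) ^ 2 * η.eval t := by
              have := hu t
              rw [hfac] at this
              simpa [eval_mul, eval_pow] using this
            have hp : 0 < (t - z) ^ 2 := by
              have := sub_ne_zero.mpr ht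
              positivity
            nlinarith
          intro x
          by_cases hx : x = z
          · rw [hx]
            refine eval_nonneg_of_closure (s := ({z} : Set ℝ)ᶜ) (fun t ht => haux t ht) ?_
            rw [(dense_compl_singleton z).closure_eq]
            trivial
          · exact haux x hx
        obtain ⟨p, q, hpq⟩ := ih η (by omega) hηnn
        exact ⟨(X - C z) * p, (X - C z) * q, by rw [hfac, hpq]; ring⟩
      · obtain ⟨η, hfac⟩ := u.quadratic_dvd_of_aeval_eq_zero_im_ne_zero hz him
        set Q : Polynomial ℝ := X ^ 2 - C (2 * z.re) * X + C (‖z‖ ^ 2) with hQdef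
        have hQpos : ∀ t : ℝ, 0 < Q.eval t := fun t => by
          rw [hQdef]; exact quad_pos z him t
        have hηne : η ≠ 0 := by rintro rfl; rw [mul_zero] at hfac; exact hu0 hfac
        have hQne : Q ≠ 0 := fun h => absurd (hQpos 0) (by simp [h])
        have hQdeg : Q.natDegree = 2 := by
          rw [hQdef]; compute_degree!
        have hdeg : η.natDegree + 2 = u.natDegree := by
          rw [hfac, natDegree_mul hQne hηne, hQdeg]; ring
        have hηnn : ∀ x, 0 ≤ η.eval x := by
          intro x
          have h2 : 0 ≤ Q.eval x * η.eval x := by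
            have := hu x; rw [hfac, eval_mul] at this; exact this
          nlinarith [hQpos x]
        obtain ⟨p, q, hpq⟩ := ih η (by omega) hηnn
        have hz2 : ‖z‖ ^ 2 = z.re ^ 2 + z.im ^ 2 := by
          rw [Complex.sq_norm, Complex.normSq_apply]; ring
        have hQ2 : Q = (X - C z.re) ^ 2 + (C z.im) ^ 2 := by
          rw [hQdef, hz2]
          simp only [map_add, map_mul, map_pow, map_ofNat]
          ring
        exact ⟨(X - C z.re) * p - C z.im * q, (X - C z.re) * q + C z.im * p,
          by rw [hfac, hpq, hQ2]; ring⟩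

lemma natDegree_le_of_sq_add_sq {p q : Polynomial ℝ} {n : ℕ}
    (h : (p ^ 2 + q ^ 2).natDegree ≤ 2 * n) : p.natDegree ≤ n := by
  by_cases hp : p = 0
  · simp [hp]
  by_cases hq : q = 0
  · have : (p ^ 2 + q ^ 2).natDegree = 2 * p.natDegree := by
      rw [hq]; simp [natDegree_pow]
    omega
  set D := max ((p ^ 2).natDegree) ((q ^ 2).natDegree) with hD
  have key : ∀ h : Polynomial ℝ, (h ^ 2).natDegree ≤ D → 0 ≤ (h ^ 2).coeff D := by
    intro h hh
    rcases eq_or_lt_of_le hh with heq | hlt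
    · rw [← heq, coeff_natDegree, leadingCoeff_pow]
      exact sq_nonneg _
    · rw [coeff_eq_zero_of_natDegree_lt hlt]
  have keypos : ∀ h : Polynomial ℝ, h ≠ 0 → (h ^ 2).natDegree = D → 0 < (h ^ 2).coeff D := by
    intro h h0 heq
    rw [← heq, coeff_natDegree, leadingCoeff_pow]
    have : h.leadingCoeff ≠ 0 := leadingCoeff_ne_zero.mpr h0
    positivity
  have hDle : D ≤ (p ^ 2 + q ^ 2).natDegree := by
    apply le_natDegree_of_ne_zero
    rw [coeff_add]
    rcases le_total ((q ^ 2).natDegree) ((p ^ 2).natDegree) with hle | hle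
    · have h1 := keypos p hp (max_eq_left hle).symm
      have h2 := key q (le_max_right _ _)
      positivity
    · have h1 := keypos q hq (max_eq_right hle).symm
      have h2 := key p (le_max_left _ _)
      positivity
  have h3 : (p ^ 2).natDegree = 2 * p.natDegree := by simp [natDegree_pow]
  have h4 : (p ^ 2).natDegree ≤ D := le_max_left _ _
  omega

/-- Odd-type representation: `ξ = (b-X) f + (X-a) g` with `f, g ≥ 0` on ℝ of degree `≤ 2k`. -/
def OdRep (a b : ℝ) (k : ℕ) (ξ : Polynomial ℝ) : Prop :=
  ∃ f g : Polynomial ℝ, (∀ t : ℝ, 0 ≤ f.eval t) ∧ (∀ t : ℝ, 0 ≤ g.eval t) ∧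
    f.degree ≤ ((2 * k : ℕ) : WithBot ℕ) ∧ g.degree ≤ ((2 * k : ℕ) : WithBot ℕ) ∧
    ξ = (C b - X) * f + (X - C a) * g

/-- Even-type representation: `ξ = f + (b-X)(X-a) g`. -/
def EvRep (a b : ℝ) (k : ℕ) (ξ : Polynomial ℝ) : Prop :=
  ∃ f g : Polynomial ℝ, (∀ t : ℝ, 0 ≤ f.eval t) ∧ (∀ t : ℝ, 0 ≤ g.eval t) ∧
    f.degree ≤ ((2 * k : ℕ) : WithBot ℕ) ∧ ((C b - X) * (X - C a) * g).degree ≤ ((2 * k : ℕ) : WithBot ℕ) ∧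
    ξ = f + (C b - X) * (X - C a) * g

lemma degree_C_sub_X (b : ℝ) : (C b - X).degree = 1 := by
  have h : (C b - X : Polynomial ℝ) = -(X - C b) := by ring
  rw [h, degree_neg, degree_X_sub_C]

lemma degle_mul {p q : Polynomial ℝ} {m k : ℕ} (hp : p.degree ≤ (m : ℕ)) (hq : q.degree ≤ (k : ℕ)) :
    (p * q).degree ≤ ((m + k : ℕ) : WithBot ℕ) :=
  le_trans (degree_mul_le p q) (by push_cast; exact add_le_add hp hq)

lemma degle_C_mul {c : ℝ} {p : Polynomial ℝ} : (C c * p).degree ≤ p.degree :=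
  le_trans (degree_mul_le _ _) (by simpa using add_le_add_left degree_C_le p.degree)

lemma EvRep_of_nonneg {a b : ℝ} {k : ℕ} {ξ : Polynomial ℝ}
    (h : ∀ t : ℝ, 0 ≤ ξ.eval t) (hd : ξ.degree ≤ ((2 * k : ℕ) : WithBot ℕ)) : EvRep a b k ξ :=
  ⟨ξ, 0, h, fun t => by simp, hd, by simp, by ring⟩

lemma OdRep_of_EvRep {a b : ℝ} (hab : a < b) {k : ℕ} {ξ : Polynomial ℝ}
    (h : EvRep a b k ξ) : OdRep a b k ξ := by
  obtain ⟨f, g, hf, hg, hdf, hdg, heq⟩ := h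
  have hba : b - a ≠ 0 := sub_ne_zero.mpr hab.ne'
  have hba' : 0 ≤ (b - a)⁻¹ := le_of_lt (inv_pos.mpr (by linarith))
  have hdg2 : ((X - C a) ^ 2 * g).degree ≤ ((2 * k : ℕ) : WithBot ℕ) := by
    have : ((X - C a) ^ 2 * g).degree = ((C b - X) * (X - C a) * g).degree := by
      rw [sq, degree_mul, degree_mul, degree_mul, degree_mul, degree_X_sub_C, degree_C_sub_X]
    rwa [this]
  have hdg3 : ((C b - X) ^ 2 * g).degree ≤ ((2 * k : ℕ) : WithBot ℕ) := by
    have : ((C b - X) ^ 2 * g).degree = ((C b - X) * (X - C a) * g).degree := by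
      rw [sq, degree_mul, degree_mul, degree_mul, degree_mul, degree_X_sub_C, degree_C_sub_X]
    rwa [this]
  refine ⟨C (b - a)⁻¹ * (f + (X - C a) ^ 2 * g), C (b - a)⁻¹ * (f + (C b - X) ^ 2 * g),
    ?_, ?_, ?_, ?_, ?_⟩
  · intro t
    simp only [eval_mul, eval_add, eval_pow, eval_sub, eval_C, eval_X]
    have := hf t; have := hg t
    positivity
  · intro t
    simp only [eval_mul, eval_add, eval_pow, eval_sub, eval_C, eval_X]
    have := hf t; have := hg t
    positivity
  · exact le_trans degle_C_mul (le_trans (degree_add_le _ _) (max_le hdf hdg2))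
  · exact le_trans degle_C_mul (le_trans (degree_add_le _ _) (max_le hdf hdg3))
  · have key : (C b - X) * (C (b - a)⁻¹ * (f + (X - C a) ^ 2 * g)) +
        (X - C a) * (C (b - a)⁻¹ * (f + (C b - X) ^ 2 * g)) =
        C (b - a)⁻¹ * ((C b - C a) * (f + (C b - X) * (X - C a) * g)) := by ring
    rw [heq, key, ← C_sub, ← mul_assoc, ← C_mul, inv_mul_cancel₀ hba, C_1, one_mul]

lemma OdRep_unscale {a b c : ℝ} (hc : 0 < c) {k : ℕ} {ξ : Polynomial ℝ}
    (h : OdRep a b k (C c * ξ)) : OdRep a b k ξ := by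
  obtain ⟨f, g, hf, hg, hdf, hdg, heq⟩ := h
  refine ⟨C c⁻¹ * f, C c⁻¹ * g, ?_, ?_, le_trans degle_C_mul hdf, le_trans degle_C_mul hdg, ?_⟩
  · intro t; simp only [eval_mul, eval_C]; exact mul_nonneg (by positivity) (hf t)
  · intro t; simp only [eval_mul, eval_C]; exact mul_nonneg (by positivity) (hg t)
  · have : ξ = C c⁻¹ * (C c * ξ) := by
      rw [← mul_assoc, ← C_mul, inv_mul_cancel₀ hc.ne', C_1, one_mul]
    rw [this, heq]; ring

lemma OdRep_linear_left {a b r : ℝ} (hab : a < b) (hr : r ≤ a) : OdRep a b 0 (X - C r) := by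
  apply OdRep_unscale (c := b - a) (by linarith)
  refine ⟨C (a - r), C (b - r), ?_, ?_, ?_, ?_, ?_⟩
  · intro t; rw [eval_C]; linarith
  · intro t; rw [eval_C]; linarith
  · exact le_trans degree_C_le (by simp)
  · exact le_trans degree_C_le (by simp)
  · simp only [map_sub]; ring

lemma OdRep_linear_right {a b r : ℝ} (hab : a < b) (hr : b ≤ r) : OdRep a b 0 (C r - X) := by
  apply OdRep_unscale (c := b - a) (by linarith)
  refine ⟨C (r - a), C (r - b), ?_, ?_, ?_, ?_, ?_⟩
  · intro t; rw [eval_C]; linarith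
  · intro t; rw [eval_C]; linarith
  · exact le_trans degree_C_le (by simp)
  · exact le_trans degree_C_le (by simp)
  · simp only [map_sub]; ring

lemma natcast_le {m n : ℕ} (h : m ≤ n) : ((m : ℕ) : WithBot ℕ) ≤ ((n : ℕ) : WithBot ℕ) :=
  Nat.cast_le.mpr h

lemma deg_convert {u : Polynomial ℝ} (hu : u.degree = 1) (a b : ℝ) (g h : Polynomial ℝ) :
    (u ^ 2 * (g * h)).degree = g.degree + ((C b - X) * (X - C a) * h).degree := by
  rw [sq, degree_mul, degree_mul, degree_mul, degree_mul, degree_mul, hu,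
    degree_X_sub_C, degree_C_sub_X]
  abel

lemma degle_sq_mul {u : Polynomial ℝ} (hu : u.degree = 1) {p : Polynomial ℝ} {m : ℕ}
    (hp : p.degree ≤ ((m : ℕ) : WithBot ℕ)) :
    (u ^ 2 * p).degree ≤ ((2 + m : ℕ) : WithBot ℕ) := by
  have h2 : (u ^ 2).degree ≤ ((2 : ℕ) : WithBot ℕ) := by
    rw [sq]
    exact le_trans (degree_mul_le _ _) (by rw [hu]; norm_cast)
  exact degle_mul h2 hp

lemma OdRep_mul_EvRep {a b : ℝ} {j k : ℕ} {ξ η : Polynomial ℝ}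
    (hξ : OdRep a b j ξ) (hη : EvRep a b k η) : OdRep a b (j + k) (ξ * η) := by
  obtain ⟨f₁, g₁, hf₁, hg₁, hdf₁, hdg₁, he₁⟩ := hξ
  obtain ⟨f₂, g₂, hf₂, hg₂, hdf₂, hdg₂, he₂⟩ := hη
  refine ⟨f₁ * f₂ + (X - C a) ^ 2 * (g₁ * g₂), g₁ * f₂ + (C b - X) ^ 2 * (f₁ * g₂),
    ?_, ?_, ?_, ?_, ?_⟩
  · intro t
    simp only [eval_add, eval_mul, eval_pow, eval_sub, eval_C, eval_X]
    have := hf₁ t; have := hf₂ t; have := hg₁ t; have := hg₂ t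
    positivity
  · intro t
    simp only [eval_add, eval_mul, eval_pow, eval_sub, eval_C, eval_X]
    have := hf₁ t; have := hf₂ t; have := hg₁ t; have := hg₂ t
    positivity
  · refine le_trans (degree_add_le _ _) (max_le ?_ ?_)
    · exact le_trans (degle_mul hdf₁ hdf₂) (natcast_le (by omega))
    · rw [deg_convert (degree_X_sub_C a) a b]
      calc g₁.degree + ((C b - X) * (X - C a) * g₂).degree
          ≤ ((2 * j : ℕ) : WithBot ℕ) + ((2 * k : ℕ) : WithBot ℕ) := add_le_add hdg₁ hdg₂
        _ = ((2 * (j + k) : ℕ) : WithBot ℕ) := by push_cast; ring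
  · refine le_trans (degree_add_le _ _) (max_le ?_ ?_)
    · exact le_trans (degle_mul hdg₁ hdf₂) (natcast_le (by omega))
    · rw [deg_convert (degree_C_sub_X b) a b]
      calc f₁.degree + ((C b - X) * (X - C a) * g₂).degree
          ≤ ((2 * j : ℕ) : WithBot ℕ) + ((2 * k : ℕ) : WithBot ℕ) := add_le_add hdf₁ hdg₂
        _ = ((2 * (j + k) : ℕ) : WithBot ℕ) := by push_cast; ring
  · rw [he₁, he₂]; ring

lemma OdRep_mul_OdRep {a b : ℝ} {j k : ℕ} {ξ η : Polynomial ℝ}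
    (hξ : OdRep a b j ξ) (hη : OdRep a b k η) : EvRep a b (j + k + 1) (ξ * η) := by
  obtain ⟨f₁, g₁, hf₁, hg₁, hdf₁, hdg₁, he₁⟩ := hξ
  obtain ⟨f₂, g₂, hf₂, hg₂, hdf₂, hdg₂, he₂⟩ := hη
  refine ⟨(C b - X) ^ 2 * (f₁ * f₂) + (X - C a) ^ 2 * (g₁ * g₂), f₁ * g₂ + g₁ * f₂,
    ?_, ?_, ?_, ?_, ?_⟩
  · intro t
    simp only [eval_add, eval_mul, eval_pow, eval_sub, eval_C, eval_X]
    have := hf₁ t; have := hf₂ t; have := hg₁ t; have := hg₂ t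
    positivity
  · intro t
    simp only [eval_add, eval_mul]
    have := hf₁ t; have := hf₂ t; have := hg₁ t; have := hg₂ t
    positivity
  · refine le_trans (degree_add_le _ _) (max_le ?_ ?_)
    · refine le_trans (degle_sq_mul (degree_C_sub_X b) (degle_mul hdf₁ hdf₂)) ?_
      exact natcast_le (by omega)
    · refine le_trans (degle_sq_mul (degree_X_sub_C a) (degle_mul hdg₁ hdg₂)) ?_
      exact natcast_le (by omega)
  · have hw : ((C b - X) * (X - C a)).degree ≤ ((2 : ℕ) : WithBot ℕ) := by
      rw [degree_mul, degree_X_sub_C, degree_C_sub_X]; norm_cast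
    have hsum : (f₁ * g₂ + g₁ * f₂).degree ≤ ((2 * j + 2 * k : ℕ) : WithBot ℕ) := by
      refine le_trans (degree_add_le _ _) (max_le ?_ ?_)
      · exact le_trans (degle_mul hdf₁ hdg₂) (natcast_le (by omega))
      · exact le_trans (degle_mul hdg₁ hdf₂) (natcast_le (by omega))
    exact le_trans (degle_mul hw hsum) (natcast_le (by omega))
  · rw [he₁, he₂]; ring

lemma OdRep_sq_mul {a b r : ℝ} {k : ℕ} {ξ : Polynomial ℝ}
    (hξ : OdRep a b k ξ) : OdRep a b (k + 1) ((X - C r) ^ 2 * ξ) := by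
  obtain ⟨f, g, hf, hg, hdf, hdg, heq⟩ := hξ
  refine ⟨(X - C r) ^ 2 * f, (X - C r) ^ 2 * g, ?_, ?_, ?_, ?_, ?_⟩
  · intro t
    simp only [eval_mul, eval_pow, eval_sub, eval_C, eval_X]
    have := hf t; positivity
  · intro t
    simp only [eval_mul, eval_pow, eval_sub, eval_C, eval_X]
    have := hg t; positivity
  · refine le_trans (degle_sq_mul (degree_X_sub_C r) hdf) ?_
    exact natcast_le (by omega)
  · refine le_trans (degle_sq_mul (degree_X_sub_C r) hdg) ?_
    exact natcast_le (by omega)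
  · rw [heq]; ring

lemma EvRep_sq_mul {a b r : ℝ} {k : ℕ} {ξ : Polynomial ℝ}
    (hξ : EvRep a b k ξ) : EvRep a b (k + 1) ((X - C r) ^ 2 * ξ) := by
  obtain ⟨f, g, hf, hg, hdf, hdg, heq⟩ := hξ
  refine ⟨(X - C r) ^ 2 * f, (X - C r) ^ 2 * g, ?_, ?_, ?_, ?_, ?_⟩
  · intro t
    simp only [eval_mul, eval_pow, eval_sub, eval_C, eval_X]
    have := hf t; positivity
  · intro t
    simp only [eval_mul, eval_pow, eval_sub, eval_C, eval_X]
    have := hg t; positivity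
  · refine le_trans (degle_sq_mul (degree_X_sub_C r) hdf) ?_
    exact natcast_le (by omega)
  · have heqd : ((C b - X) * (X - C a) * ((X - C r) ^ 2 * g)).degree
        = ((X - C r) ^ 2).degree + ((C b - X) * (X - C a) * g).degree := by
      simp only [degree_mul]
      abel
    rw [heqd]
    have h2 : ((X - C r) ^ 2).degree = ((2 : ℕ) : WithBot ℕ) := by
      rw [sq, degree_mul, degree_X_sub_C]; norm_cast
    rw [h2]
    calc ((2 : ℕ) : WithBot ℕ) + ((C b - X) * (X - C a) * g).degree
        ≤ ((2 : ℕ) : WithBot ℕ) + ((2 * k : ℕ) : WithBot ℕ) := add_le_add_right hdg _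
      _ = ((2 * (k + 1) : ℕ) : WithBot ℕ) := by push_cast; ring
  · rw [heq]; ring

lemma exists_root_of_odd_natDegree' {ξ : Polynomial ℝ} (hodd : Odd ξ.natDegree)
    (hlc : 0 ≤ ξ.leadingCoeff) : ∃ r : ℝ, ξ.IsRoot r := by
  have h0 : ξ ≠ 0 := by rintro rfl; simp at hodd
  have hdeg : 0 < ξ.degree := by
    rw [degree_eq_natDegree h0]
    exact_mod_cast hodd.pos
  have htop := ξ.tendsto_atTop_of_leadingCoeff_nonneg hdeg hlc
  set Q : Polynomial ℝ := ξ.comp (-X) with hQ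
  have hnX : (-X : Polynomial ℝ).natDegree = 1 := by simp
  have hQnd : Q.natDegree = ξ.natDegree := by
    rw [hQ, natDegree_comp, hnX, mul_one]
  have hQ0 : Q ≠ 0 := by
    intro h
    rw [h] at hQnd
    simp only [natDegree_zero] at hQnd
    rw [← hQnd] at hodd
    simp at hodd
  have hQlc : Q.leadingCoeff = -ξ.leadingCoeff := by
    rw [hQ, leadingCoeff_comp (by rw [hnX]; exact one_ne_zero)]
    simp only [leadingCoeff_neg, leadingCoeff_X]
    rw [hodd.neg_one_pow]
    ring
  have hQdeg : 0 < Q.degree := by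
    rw [degree_eq_natDegree hQ0, hQnd]
    exact_mod_cast hodd.pos
  have hbot := Q.tendsto_atBot_of_leadingCoeff_nonpos hQdeg (by rw [hQlc]; linarith)
  obtain ⟨x, hx⟩ := (hbot.eventually (eventually_lt_atBot (0 : ℝ))).exists
  obtain ⟨y, hy⟩ := (htop.eventually (eventually_gt_atTop (0 : ℝ))).exists
  have hx' : ξ.eval (-x) < 0 := by
    rw [hQ] at hx
    simpa [eval_comp] using hx
  have h0mem : (0 : ℝ) ∈ uIcc (ξ.eval (-x)) (ξ.eval y) := by
    rw [Set.mem_uIcc]; left; exact ⟨hx'.le, hy.le⟩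
  obtain ⟨r, _, hr⟩ := intermediate_value_uIcc (ξ.continuous.continuousOn) h0mem
  exact ⟨r, hr⟩

lemma exists_root_of_odd_natDegree {ξ : Polynomial ℝ} (hodd : Odd ξ.natDegree) :
    ∃ r : ℝ, ξ.IsRoot r := by
  rcases le_or_gt 0 ξ.leadingCoeff with hlc | hlc
  · exact exists_root_of_odd_natDegree' hodd hlc
  · obtain ⟨r, hr⟩ := exists_root_of_odd_natDegree' (ξ := -ξ) (by simpa using hodd)
      (by rw [leadingCoeff_neg]; linarith)
    exact ⟨r, by simpa [IsRoot] using hr⟩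

lemma pos_of_no_root {ξ : Polynomial ℝ} (hnr : ∀ r : ℝ, ¬ξ.IsRoot r) {t₀ : ℝ}
    (h₀ : 0 < ξ.eval t₀) (t : ℝ) : 0 < ξ.eval t := by
  rcases lt_trichotomy (ξ.eval t) 0 with h | h | h
  · exfalso
    have h0mem : (0 : ℝ) ∈ uIcc (ξ.eval t) (ξ.eval t₀) := by
      rw [Set.mem_uIcc]; left; exact ⟨h.le, h₀.le⟩
    obtain ⟨r, _, hr⟩ := intermediate_value_uIcc (ξ.continuous.continuousOn) h0mem
    exact hnr r hr
  · exact absurd h (hnr t)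
  · exact h
lemma main_aux (a b : ℝ) (hab : a < b) : ∀ d : ℕ, ∀ ξ : Polynomial ℝ, ξ.natDegree ≤ d →
    (∀ t ∈ Icc a b, 0 ≤ ξ.eval t) →
    ∀ n : ℕ, (ξ.natDegree ≤ 2 * n + 1 → OdRep a b n ξ) ∧
      (ξ.natDegree ≤ 2 * n → EvRep a b n ξ) := by
  have hw : ∀ g : Polynomial ℝ, ((C b - X) * (X - C a) * g).degree
      = ((2 : ℕ) : WithBot ℕ) + g.degree := by
    intro g
    rw [degree_mul, degree_mul, degree_X_sub_C, degree_C_sub_X]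
    norm_cast
  have hconva : ∀ g : Polynomial ℝ, ((X - C a) ^ 2 * g).degree
      = ((C b - X) * (X - C a) * g).degree := by
    intro g
    rw [sq, degree_mul, degree_mul, degree_mul, degree_mul, degree_X_sub_C, degree_C_sub_X]
  have hconvb : ∀ g : Polynomial ℝ, ((C b - X) ^ 2 * g).degree
      = ((C b - X) * (X - C a) * g).degree := by
    intro g
    rw [sq, degree_mul, degree_mul, degree_mul, degree_mul, degree_X_sub_C, degree_C_sub_X]
  intro d
  induction d with
  | zero =>
    intro ξ hd hpos n
    have h0 : ξ.natDegree = 0 := Nat.le_zero.mp hd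
    have hc : ξ = C (ξ.coeff 0) := eq_C_of_natDegree_le_zero h0.le
    have hnn : ∀ t : ℝ, 0 ≤ ξ.eval t := by
      intro t
      have h1 := hpos a ⟨le_refl a, hab.le⟩
      rw [hc] at h1 ⊢
      simpa using h1
    have hEv : EvRep a b n ξ :=
      EvRep_of_nonneg hnn (natDegree_le_iff_degree_le.mp (by omega))
    exact ⟨fun _ => OdRep_of_EvRep hab hEv, fun _ => hEv⟩
  | succ d ih =>
    intro ξ hd hpos n
    by_cases hdlt : ξ.natDegree ≤ d
    · exact ih ξ hdlt hpos n
    have hdeq : ξ.natDegree = d + 1 := by omega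
    have hξ0 : ξ ≠ 0 := by rintro rfl; simp at hdeq
    by_cases hroot : ∃ r ∈ Icc a b, ξ.IsRoot r
    · obtain ⟨r, hrmem, hr⟩ := hroot
      rcases eq_or_lt_of_le hrmem.1 with rfl | hra
      · -- root at a  (here a = a; the substituted variable is named a... use hr : ξ.IsRoot a)
        obtain ⟨η, hfac⟩ : ∃ η, ξ = (X - C a) * η :=
          ⟨ξ /ₘ (X - C a), (mul_divByMonic_eq_iff_isRoot.mpr hr).symm⟩
        have hηne : η ≠ 0 := by rintro rfl; rw [mul_zero] at hfac; exact hξ0 hfac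
        have hηd : η.natDegree + 1 = ξ.natDegree := by
          rw [hfac, natDegree_mul (X_sub_C_ne_zero a) hηne, natDegree_X_sub_C]; ring
        have hηpos : ∀ t ∈ Icc a b, 0 ≤ η.eval t := by
          have haux : ∀ t ∈ Icc a b, t ≠ a → 0 ≤ η.eval t := by
            intro t ht hta
            have h1 : 0 ≤ (t - a) * η.eval t := by
              have := hpos t ht; rw [hfac] at this; simpa using this
            have h2 : 0 < t - a := sub_pos.mpr (lt_of_le_of_ne ht.1 (Ne.symm hta))
            nlinarith
          intro t ht
          by_cases hta : t = a
          · rw [hta]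
            refine eval_nonneg_of_closure (s := Ioo a b)
              (fun s hs => haux s ⟨hs.1.le, hs.2.le⟩ (ne_of_gt hs.1)) ?_
            rw [closure_Ioo hab.ne]
            exact ⟨le_refl a, hab.le⟩
          · exact haux t ht hta
        constructor
        · intro hdn
          obtain ⟨f, g, hf, hg, hdf, hdg, heq⟩ := (ih η (by omega) hηpos n).2 (by omega)
          refine ⟨(X - C a) ^ 2 * g, f, ?_, hf, ?_, hdf, ?_⟩
          · intro t; simp only [eval_mul, eval_pow, eval_sub, eval_C, eval_X]
            have := hg t; positivity
          · rw [hconva g]; exact hdg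
          · rw [hfac, heq]; ring
        · intro hdn
          have hn1 : 1 ≤ n := by omega
          obtain ⟨f, g, hf, hg, hdf, hdg, heq⟩ := (ih η (by omega) hηpos (n - 1)).1 (by omega)
          refine ⟨(X - C a) ^ 2 * g, f, ?_, hf, ?_, ?_, ?_⟩
          · intro t; simp only [eval_mul, eval_pow, eval_sub, eval_C, eval_X]
            have := hg t; positivity
          · exact le_trans (degle_sq_mul (degree_X_sub_C a) hdg) (natcast_le (by omega))
          · rw [hw f]
            calc ((2:ℕ) : WithBot ℕ) + f.degree
                ≤ ((2:ℕ) : WithBot ℕ) + ((2 * (n-1) : ℕ) : WithBot ℕ) := add_le_add_right hdf _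
              _ ≤ ((2 * n : ℕ) : WithBot ℕ) := by
                  rw [← Nat.cast_add]; exact natcast_le (by omega)
          · rw [hfac, heq]; ring
      rcases eq_or_lt_of_le hrmem.2 with rfl | hrb
      · -- root at b (r = b, substituted; use r as right endpoint)
        obtain ⟨η, hfac⟩ : ∃ η, ξ = (C r - X) * η := by
          have h0 : (X - C r) * (ξ /ₘ (X - C r)) = ξ := mul_divByMonic_eq_iff_isRoot.mpr hr
          exact ⟨-(ξ /ₘ (X - C r)), by
            rw [show (C r - X) * -(ξ /ₘ (X - C r)) = (X - C r) * (ξ /ₘ (X - C r)) by ring, h0]⟩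
        have hCrX : (C r - X : Polynomial ℝ) ≠ 0 := by
          intro h
          have h1 := degree_C_sub_X r
          rw [h] at h1
          simp at h1
        have hCrXd : (C r - X : Polynomial ℝ).natDegree = 1 :=
          natDegree_eq_of_degree_eq_some (degree_C_sub_X r)
        have hηne : η ≠ 0 := by rintro rfl; rw [mul_zero] at hfac; exact hξ0 hfac
        have hηd : η.natDegree + 1 = ξ.natDegree := by
          rw [hfac, natDegree_mul hCrX hηne, hCrXd]; ring
        have hηpos : ∀ t ∈ Icc a r, 0 ≤ η.eval t := by
          have haux : ∀ t ∈ Icc a r, t ≠ r → 0 ≤ η.eval t := by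
            intro t ht hta
            have h1 : 0 ≤ (r - t) * η.eval t := by
              have := hpos t ht; rw [hfac] at this; simpa using this
            have h2 : 0 < r - t := sub_pos.mpr (lt_of_le_of_ne ht.2 hta)
            nlinarith
          intro t ht
          by_cases hta : t = r
          · rw [hta]
            refine eval_nonneg_of_closure (s := Ioo a r)
              (fun s hs => haux s ⟨hs.1.le, hs.2.le⟩ (ne_of_lt hs.2)) ?_
            rw [closure_Ioo hab.ne]
            exact ⟨hab.le, le_refl r⟩
          · exact haux t ht hta
        constructor
        · intro hdn
          obtain ⟨f, g, hf, hg, hdf, hdg, heq⟩ := (ih η (by omega) hηpos n).2 (by omega)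
          refine ⟨f, (C r - X) ^ 2 * g, hf, ?_, hdf, ?_, ?_⟩
          · intro t; simp only [eval_mul, eval_pow, eval_sub, eval_C, eval_X]
            have := hg t; positivity
          · rw [hconvb g]; exact hdg
          · rw [hfac, heq]; ring
        · intro hdn
          have hn1 : 1 ≤ n := by omega
          obtain ⟨f, g, hf, hg, hdf, hdg, heq⟩ := (ih η (by omega) hηpos (n - 1)).1 (by omega)
          refine ⟨(C r - X) ^ 2 * f, g, ?_, hg, ?_, ?_, ?_⟩
          · intro t; simp only [eval_mul, eval_pow, eval_sub, eval_C, eval_X]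
            have := hf t; positivity
          · exact le_trans (degle_sq_mul (degree_C_sub_X r) hdf) (natcast_le (by omega))
          · rw [hw g]
            calc ((2:ℕ) : WithBot ℕ) + g.degree
                ≤ ((2:ℕ) : WithBot ℕ) + ((2 * (n-1) : ℕ) : WithBot ℕ) := add_le_add_right hdg _
              _ ≤ ((2 * n : ℕ) : WithBot ℕ) := by
                  rw [← Nat.cast_add]; exact natcast_le (by omega)
          · rw [hfac, heq]; ring
      · -- interior root
        have hmin : IsLocalMin (fun x => ξ.eval x) r := by
          have hmem : Icc a b ∈ nhds r := Icc_mem_nhds hra hrb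
          refine Filter.eventually_iff_exists_mem.mpr ⟨Icc a b, hmem, fun y hy => ?_⟩
          have := hpos y hy
          simpa [hr.eq_zero] using this
        obtain ⟨η, hfac⟩ := sq_dvd_of_root_of_deriv_root hr (deriv_root_of_isLocalMin hmin)
        have hXne : ((X - C r : Polynomial ℝ)) ^ 2 ≠ 0 := pow_ne_zero _ (X_sub_C_ne_zero r)
        have hηne : η ≠ 0 := by rintro rfl; rw [mul_zero] at hfac; exact hξ0 hfac
        have hηd : η.natDegree + 2 = ξ.natDegree := by
          rw [hfac, natDegree_mul hXne hηne, natDegree_pow, natDegree_X_sub_C]; ring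
        have hηpos : ∀ t ∈ Icc a b, 0 ≤ η.eval t := by
          have haux : ∀ t ∈ Icc a b, t ≠ r → 0 ≤ η.eval t := by
            intro t ht hta
            have h1 : 0 ≤ (t - r) ^ 2 * η.eval t := by
              have := hpos t ht; rw [hfac] at this
              simpa [eval_mul, eval_pow] using this
            have h2 : 0 < (t - r) ^ 2 := by
              have := sub_ne_zero.mpr hta
              positivity
            nlinarith
          intro t ht
          by_cases hta : t = r
          · rw [hta]
            refine eval_nonneg_of_closure (s := Ioo r b)
              (fun s hs => haux s ⟨(hra.trans hs.1).le, hs.2.le⟩ (ne_of_gt hs.1)) ?_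
            rw [closure_Ioo hrb.ne]
            exact ⟨le_refl r, hrb.le⟩
          · exact haux t ht hta
        constructor
        · intro hdn
          have hn1 : 1 ≤ n := by omega
          have hOd := (ih η (by omega) hηpos (n - 1)).1 (by omega)
          have h2 := OdRep_sq_mul (r := r) hOd
          rw [← hfac] at h2
          have h3 : n - 1 + 1 = n := by omega
          rwa [h3] at h2
        · intro hdn
          have hn1 : 1 ≤ n := by omega
          have hEv := (ih η (by omega) hηpos (n - 1)).2 (by omega)
          have h2 := EvRep_sq_mul (r := r) hEv
          rw [← hfac] at h2
          have h3 : n - 1 + 1 = n := by omega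
          rwa [h3] at h2
    · -- no root in [a, b]
      have hpos' : ∀ t ∈ Icc a b, 0 < ξ.eval t := by
        intro t ht
        refine lt_of_le_of_ne (hpos t ht) ?_
        intro h
        exact hroot ⟨t, ht, h.symm⟩
      by_cases hrr : ∃ r : ℝ, ξ.IsRoot r
      · obtain ⟨r, hr⟩ := hrr
        have hrnot : r ∉ Icc a b := fun h => (hpos' r h).ne' hr
        rcases lt_or_ge r a with hra | hra
        · -- root left of a
          obtain ⟨η, hfac⟩ : ∃ η, ξ = (X - C r) * η :=
            ⟨ξ /ₘ (X - C r), (mul_divByMonic_eq_iff_isRoot.mpr hr).symm⟩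
          have hηne : η ≠ 0 := by rintro rfl; rw [mul_zero] at hfac; exact hξ0 hfac
          have hηd : η.natDegree + 1 = ξ.natDegree := by
            rw [hfac, natDegree_mul (X_sub_C_ne_zero r) hηne, natDegree_X_sub_C]; ring
          have hηpos : ∀ t ∈ Icc a b, 0 ≤ η.eval t := by
            intro t ht
            have h1 : 0 ≤ (t - r) * η.eval t := by
              have := hpos t ht; rw [hfac] at this; simpa using this
            have h2 : 0 < t - r := by linarith [ht.1]
            nlinarith
          constructor
          · intro hdn
            have hEv := (ih η (by omega) hηpos n).2 (by omega)
            have h2 := OdRep_mul_EvRep (OdRep_linear_left hab hra.le) hEv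
            rw [← hfac, zero_add] at h2
            exact h2
          · intro hdn
            have hn1 : 1 ≤ n := by omega
            have hOd := (ih η (by omega) hηpos (n - 1)).1 (by omega)
            have h2 := OdRep_mul_OdRep (OdRep_linear_left hab hra.le) hOd
            rw [← hfac, zero_add] at h2
            have h3 : n - 1 + 1 = n := by omega
            rwa [h3] at h2
        · -- root right of b
          have hrb : b < r := by
            rcases lt_or_ge b r with h | h
            · exact h
            · exact absurd ⟨hra, h⟩ hrnot
          obtain ⟨η, hfac⟩ : ∃ η, ξ = (C r - X) * η := by
            have h0 : (X - C r) * (ξ /ₘ (X - C r)) = ξ := mul_divByMonic_eq_iff_isRoot.mpr hr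
            exact ⟨-(ξ /ₘ (X - C r)), by
            rw [show (C r - X) * -(ξ /ₘ (X - C r)) = (X - C r) * (ξ /ₘ (X - C r)) by ring, h0]⟩
          have hCrX : (C r - X : Polynomial ℝ) ≠ 0 := by
            intro h
            have h1 := degree_C_sub_X r
            rw [h] at h1
            simp at h1
          have hCrXd : (C r - X : Polynomial ℝ).natDegree = 1 :=
            natDegree_eq_of_degree_eq_some (degree_C_sub_X r)
          have hηne : η ≠ 0 := by rintro rfl; rw [mul_zero] at hfac; exact hξ0 hfac
          have hηd : η.natDegree + 1 = ξ.natDegree := by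
            rw [hfac, natDegree_mul hCrX hηne, hCrXd]; ring
          have hηpos : ∀ t ∈ Icc a b, 0 ≤ η.eval t := by
            intro t ht
            have h1 : 0 ≤ (r - t) * η.eval t := by
              have := hpos t ht; rw [hfac] at this; simpa using this
            have h2 : 0 < r - t := by linarith [ht.2]
            nlinarith
          constructor
          · intro hdn
            have hEv := (ih η (by omega) hηpos n).2 (by omega)
            have h2 := OdRep_mul_EvRep (OdRep_linear_right hab hrb.le) hEv
            rw [← hfac, zero_add] at h2
            exact h2
          · intro hdn
            have hn1 : 1 ≤ n := by omega
            have hOd := (ih η (by omega) hηpos (n - 1)).1 (by omega)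
            have h2 := OdRep_mul_OdRep (OdRep_linear_right hab hrb.le) hOd
            rw [← hfac, zero_add] at h2
            have h3 : n - 1 + 1 = n := by omega
            rwa [h3] at h2
      · -- no real roots at all
        push_neg at hrr
        have hposall : ∀ t : ℝ, 0 < ξ.eval t :=
          pos_of_no_root hrr (hpos' a ⟨le_refl a, hab.le⟩)
        constructor
        · intro hdn
          have hne : ξ.natDegree ≠ 2 * n + 1 := by
            intro h
            obtain ⟨r, hr⟩ := exists_root_of_odd_natDegree (ξ := ξ) (by rw [h]; exact ⟨n, by ring⟩)
            exact hrr r hr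
          have hEv : EvRep a b n ξ :=
            EvRep_of_nonneg (fun t => (hposall t).le)
              (natDegree_le_iff_degree_le.mp (by omega))
          exact OdRep_of_EvRep hab hEv
        · intro hdn
          exact EvRep_of_nonneg (fun t => (hposall t).le)
            (natDegree_le_iff_degree_le.mp (by omega))

/-- (Lukács/Markov, odd degree) A real polynomial of degree
≤ 2n+1 is nonnegative on [a,b] iff ξ(t) = (b-t)·f(t) + (t-a)·g(t) with f, g
sums of two squares of degree-≤n polynomials. -/
theorem nonneg_interval_odd (n : ℕ) (a b : ℝ) (hab : a < b) (ξ : Polynomial ℝ)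
    (hdeg : ξ.natDegree ≤ 2 * n + 1) :
    (∀ t ∈ Set.Icc a b, 0 ≤ ξ.eval t) ↔
      ∃ p q r s : Polynomial ℝ,
        p.natDegree ≤ n ∧ q.natDegree ≤ n ∧ r.natDegree ≤ n ∧ s.natDegree ≤ n ∧
        ∀ t : ℝ, ξ.eval t =
          (b - t) * ((p.eval t) ^ 2 + (q.eval t) ^ 2) +
            (t - a) * ((r.eval t) ^ 2 + (s.eval t) ^ 2) := by
  constructor
  · intro hpos
    obtain ⟨f, g, hf, hg, hdf, hdg, heq⟩ :=
      (main_aux a b hab ξ.natDegree ξ le_rfl hpos n).1 hdeg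
    obtain ⟨p, q, hpq⟩ := exists_sq_add_sq f.natDegree f le_rfl hf
    obtain ⟨r, s, hrs⟩ := exists_sq_add_sq g.natDegree g le_rfl hg
    have hfn : (p ^ 2 + q ^ 2).natDegree ≤ 2 * n := by
      rw [← hpq]; exact natDegree_le_iff_degree_le.mpr hdf
    have hgn : (r ^ 2 + s ^ 2).natDegree ≤ 2 * n := by
      rw [← hrs]; exact natDegree_le_iff_degree_le.mpr hdg
    refine ⟨p, q, r, s, natDegree_le_of_sq_add_sq hfn,
      natDegree_le_of_sq_add_sq (q := p) (by rwa [add_comm] at hfn),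
      natDegree_le_of_sq_add_sq hgn,
      natDegree_le_of_sq_add_sq (q := r) (by rwa [add_comm] at hgn), ?_⟩
    intro t
    rw [heq, hpq, hrs]
    simp only [eval_add, eval_mul, eval_sub, eval_pow, eval_C, eval_X]
  · rintro ⟨p, q, r, s, _, _, _, _, heq⟩ t ht
    rw [heq t]
    have h1 : 0 ≤ b - t := by linarith [ht.2]
    have h2 : 0 ≤ t - a := by linarith [ht.1]
    have h3 : 0 ≤ (p.eval t) ^ 2 + (q.eval t) ^ 2 := by positivity
    have h4 : 0 ≤ (r.eval t) ^ 2 + (s.eval t) ^ 2 := by positivity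
    exact add_nonneg (mul_nonneg h1 h3) (mul_nonneg h2 h4)
end

section
/- Let a < b. A polynomial ξ of degree at most 2n is nonnegative on [a, b] if and only if there exist a polynomial f that is a sum of two squares of polynomials of degree ≤ n and a polynomial g that is a sum of two squares of polynomials of degree ≤ n-1 such that ξ(t) = f(t) + (b - t)(t - a)·g(t) for all t. -/
open Polynomial Filter Set

lemma right_lim_nonneg (p : Polynomial ℝ) {t0 u : ℝ} (h : t0 < u)
    (hp : ∀ t, t0 < t → t < u → 0 ≤ p.eval t) : 0 ≤ p.eval t0 := by
  have hc : Tendsto (fun t : ℝ => p.eval t) (nhdsWithin t0 (Set.Ioi t0)) (nhds (p.eval t0)) :=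
    (p.continuous.tendsto t0).mono_left nhdsWithin_le_nhds
  refine ge_of_tendsto hc ?_
  filter_upwards [Ioo_mem_nhdsGT_of_mem (Set.mem_Ico.2 ⟨le_refl t0, h⟩)] with t ht
  exact hp t ht.1 ht.2

lemma left_lim_nonpos (p : Polynomial ℝ) {t0 u : ℝ} (h : u < t0)
    (hp : ∀ t, u < t → t < t0 → p.eval t ≤ 0) : p.eval t0 ≤ 0 := by
  have hc : Tendsto (fun t : ℝ => p.eval t) (nhdsWithin t0 (Set.Iio t0)) (nhds (p.eval t0)) :=
    (p.continuous.tendsto t0).mono_left nhdsWithin_le_nhds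
  refine le_of_tendsto hc ?_
  filter_upwards [Ioo_mem_nhdsLT_of_mem (Set.mem_Ioc.2 ⟨h, le_refl t0⟩)] with t ht
  exact hp t ht.1 ht.2

lemma left_lim_nonneg (p : Polynomial ℝ) {t0 u : ℝ} (h : u < t0)
    (hp : ∀ t, u < t → t < t0 → 0 ≤ p.eval t) : 0 ≤ p.eval t0 := by
  have := left_lim_nonpos (-p) h (fun t h1 h2 => by
    simpa using neg_nonpos_of_nonneg (hp t h1 h2))
  simpa using this

-- factor at a root
lemma factor_root (ξ : Polynomial ℝ) (t0 : ℝ) (h : ξ.eval t0 = 0) :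
    (X - C t0) * (ξ /ₘ (X - C t0)) = ξ :=
  (mul_divByMonic_eq_iff_isRoot).2 h

lemma eval_factor_root (ξ : Polynomial ℝ) (t0 : ℝ) (h : ξ.eval t0 = 0) (t : ℝ) :
    ξ.eval t = (t - t0) * (ξ /ₘ (X - C t0)).eval t := by
  conv_lhs => rw [← factor_root ξ t0 h]
  simp [mul_comm]

lemma natDegree_divByMonic_linear (ξ : Polynomial ℝ) (t0 : ℝ) :
    (ξ /ₘ (X - C t0)).natDegree = ξ.natDegree - 1 := by
  rw [natDegree_divByMonic ξ (monic_X_sub_C t0), natDegree_X_sub_C]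

noncomputable def quadP (r s : ℝ) : Polynomial ℝ := (X - C r) ^ 2 + C s

lemma quadP_monic (r s : ℝ) : (quadP r s).Monic := by
  refine Monic.add_of_left ((monic_X_sub_C r).pow 2) ?_
  rw [degree_pow, degree_X_sub_C]
  exact lt_of_le_of_lt degree_C_le (by norm_num)

lemma quadP_ne_zero (r s : ℝ) : quadP r s ≠ 0 := (quadP_monic r s).ne_zero

lemma quadP_natDegree (r s : ℝ) : (quadP r s).natDegree = 2 := by
  have h : (quadP r s).degree = 2 := by
    rw [quadP, degree_add_eq_left_of_degree_lt, degree_pow, degree_X_sub_C]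
    · norm_num
    · rw [degree_pow, degree_X_sub_C]
      exact lt_of_le_of_lt degree_C_le (by norm_num)
  exact natDegree_eq_of_degree_eq_some h

lemma quadP_eval (r s t : ℝ) : (quadP r s).eval t = (t - r) ^ 2 + s := by
  simp [quadP]

lemma quadP_eval_pos (r : ℝ) {s : ℝ} (hs : 0 < s) (t : ℝ) : 0 < (quadP r s).eval t := by
  rw [quadP_eval]; positivity

lemma quad_factor (ξ : Polynomial ℝ) (z : ℂ) (hz : (ξ.map (algebraMap ℝ ℂ)).IsRoot z)
    (him : z.im ≠ 0) :
    quadP z.re (z.im ^ 2) * (ξ /ₘ quadP z.re (z.im ^ 2)) = ξ := by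
  have hmon := quadP_monic z.re (z.im ^ 2)
  have haevξ : Polynomial.aeval z ξ = 0 := by
    rw [aeval_def, ← eval_map]; exact hz
  have haevQ : Polynomial.aeval z (quadP z.re (z.im ^ 2)) = 0 := by
    rw [quadP]
    simp only [map_add, map_pow, map_sub, aeval_X, aeval_C]
    have hz' : (z - (algebraMap ℝ ℂ) z.re) = z.im * Complex.I := by
      have := Complex.re_add_im z
      have h2 : (algebraMap ℝ ℂ) z.re = (z.re : ℂ) := rfl
      rw [h2]; linear_combination -this
    have h3 : (algebraMap ℝ ℂ) z.im = (z.im : ℂ) := rfl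
    rw [hz', h3, mul_pow, Complex.I_sq]
    ring
  have hr : ξ %ₘ quadP z.re (z.im ^ 2) = 0 := by
    have hne1 : quadP z.re (z.im ^ 2) ≠ 1 := by
      intro h1
      have h2 := quadP_natDegree z.re (z.im ^ 2)
      rw [h1] at h2; simp at h2
    have hdeg : (ξ %ₘ quadP z.re (z.im ^ 2)).natDegree ≤ 1 := by
      have := natDegree_modByMonic_lt ξ hmon hne1
      rw [quadP_natDegree] at this
      omega
    have heq := eq_X_add_C_of_natDegree_le_one hdeg
    have haevr : Polynomial.aeval z (ξ %ₘ quadP z.re (z.im ^ 2)) = 0 := by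
      have hs := modByMonic_add_div ξ (quadP z.re (z.im ^ 2))
      have := congrArg (Polynomial.aeval z) hs
      simp only [map_add, map_mul, haevQ, zero_mul, add_zero] at this
      rw [this, haevξ]
    rw [heq] at haevr
    simp only [map_add, map_mul, aeval_X, aeval_C] at haevr
    have him' : ((algebraMap ℝ ℂ) ((ξ %ₘ quadP z.re (z.im ^ 2)).coeff 1) * z
        + (algebraMap ℝ ℂ) ((ξ %ₘ quadP z.re (z.im ^ 2)).coeff 0)).im
        = (ξ %ₘ quadP z.re (z.im ^ 2)).coeff 1 * z.im := by
      simp [Complex.add_im, Complex.mul_im]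
    have hc1 : (ξ %ₘ quadP z.re (z.im ^ 2)).coeff 1 = 0 := by
      rw [haevr] at him'
      simp at him'
      rcases him' with h | h
      · exact h
      · exact absurd h him
    have hc0 : (ξ %ₘ quadP z.re (z.im ^ 2)).coeff 0 = 0 := by
      rw [hc1] at haevr
      simpa using haevr
    rw [heq, hc1, hc0]; simp
  conv_rhs => rw [← modByMonic_add_div ξ (quadP z.re (z.im ^ 2)), hr, zero_add]

lemma natDegree_divByMonic_quad (ξ : Polynomial ℝ) (r s : ℝ) :
    (ξ /ₘ quadP r s).natDegree = ξ.natDegree - 2 := by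
  rw [natDegree_divByMonic ξ (quadP_monic r s), quadP_natDegree]


lemma double_root (ξ : Polynomial ℝ) {t0 l u : ℝ} (hl : l < t0) (hu : t0 < u)
    (hnn : ∀ t, l < t → t < u → 0 ≤ ξ.eval t) (h0 : ξ.eval t0 = 0) :
    ∃ η : Polynomial ℝ, η.natDegree = ξ.natDegree - 2 ∧ (X - C t0) ^ 2 * η = ξ ∧
      0 ≤ η.eval t0 := by
  set η1 := ξ /ₘ (X - C t0) with hη1
  have fac1 : (X - C t0) * η1 = ξ := factor_root ξ t0 h0
  have hev1 : ∀ t, ξ.eval t = (t - t0) * η1.eval t := by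
    intro t; conv_lhs => rw [← fac1]
    simp
  have hroot1 : η1.eval t0 = 0 := by
    have hge : 0 ≤ η1.eval t0 := by
      refine right_lim_nonneg η1 hu (fun t h1 h2 => ?_)
      have := hnn t (lt_trans hl h1) h2
      rw [hev1 t] at this
      exact nonneg_of_mul_nonneg_right this (by linarith)
    have hle : η1.eval t0 ≤ 0 := by
      refine left_lim_nonpos η1 hl (fun t h1 h2 => ?_)
      have := hnn t h1 (lt_trans h2 hu)
      rw [hev1 t] at this
      nlinarith
    linarith
  set η := η1 /ₘ (X - C t0) with hη
  have fac2 : (X - C t0) * η = η1 := factor_root η1 t0 hroot1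
  refine ⟨η, ?_, ?_, ?_⟩
  · rw [hη, natDegree_divByMonic_linear, hη1, natDegree_divByMonic_linear]; omega
  · rw [sq, mul_assoc, fac2, fac1]
  · have hev2 : ∀ t, ξ.eval t = (t - t0) ^ 2 * η.eval t := by
      intro t
      rw [hev1 t]
      conv_lhs => rw [← fac2]
      simp; ring
    refine right_lim_nonneg η hu (fun t h1 h2 => ?_)
    have := hnn t (lt_trans hl h1) h2
    rw [hev2 t] at this
    exact nonneg_of_mul_nonneg_right this (pow_pos (by linarith) 2)


lemma exists_complex_root (ξ : Polynomial ℝ) (hd : 1 ≤ ξ.natDegree) :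
    ∃ z : ℂ, (ξ.map (algebraMap ℝ ℂ)).IsRoot z := by
  apply Complex.exists_root
  rw [← natDegree_pos_iff_degree_pos, natDegree_map]
  omega

lemma two_squares : ∀ d : ℕ, ∀ ξ : Polynomial ℝ, ξ.natDegree ≤ d → (∀ t, 0 ≤ ξ.eval t) →
    ∃ p q : Polynomial ℝ, p.natDegree ≤ (d + 1) / 2 ∧ q.natDegree ≤ (d + 1) / 2 ∧
      ∀ t, ξ.eval t = p.eval t ^ 2 + q.eval t ^ 2 := by
  intro d
  induction d using Nat.strong_induction_on with
  | _ d IH =>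
  intro ξ hdeg hnn
  by_cases h0 : ξ.natDegree = 0
  · -- constant
    have hc := eq_C_of_natDegree_eq_zero h0
    have hcnn : 0 ≤ ξ.coeff 0 := by
      have := hnn 0; rw [hc] at this; simpa using this
    refine ⟨C (Real.sqrt (ξ.coeff 0)), 0, by simp, by simp, fun t => ?_⟩
    rw [hc]; simp [Real.sq_sqrt hcnn]
  · have hd1 : 1 ≤ ξ.natDegree := by omega
    have hd1' : 1 ≤ d := le_trans hd1 hdeg
    have hξne : ξ ≠ 0 := fun h => h0 (by simp [h])
    by_cases hroot : ∃ t0 : ℝ, ξ.eval t0 = 0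
    · obtain ⟨t0, ht0⟩ := hroot
      obtain ⟨η, hηdeg, hfac, hηt0⟩ := double_root ξ (show t0 - 1 < t0 by linarith)
        (show t0 < t0 + 1 by linarith) (fun t _ _ => hnn t) ht0
      have hev : ∀ t, ξ.eval t = (t - t0) ^ 2 * η.eval t := by
        intro t; conv_lhs => rw [← hfac]
        simp
      have hηnn : ∀ t, 0 ≤ η.eval t := by
        intro t
        rcases eq_or_ne t t0 with rfl | hne
        · exact hηt0
        · have := hnn t
          rw [hev t] at this
          refine nonneg_of_mul_nonneg_right this ?_
          have : t - t0 ≠ 0 := sub_ne_zero.2 hne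
          positivity
      have hηne : η ≠ 0 := by
        intro h; rw [h, mul_zero] at hfac; exact hξne hfac.symm
      have hdd : ξ.natDegree = 2 + η.natDegree := by
        rw [← hfac, natDegree_mul (pow_ne_zero 2 (X_sub_C_ne_zero t0)) hηne]
        · rw [natDegree_pow, natDegree_X_sub_C]
      obtain ⟨p, q, hp, hq, hpq⟩ := IH (d - 2) (by omega) η (by omega) hηnn
      refine ⟨(X - C t0) * p, (X - C t0) * q, ?_, ?_, fun t => ?_⟩
      · refine le_trans natDegree_mul_le ?_
        rw [natDegree_X_sub_C]; omega
      · refine le_trans natDegree_mul_le ?_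
        rw [natDegree_X_sub_C]; omega
      · rw [hev t, hpq t]; simp; ring
    · push_neg at hroot
      obtain ⟨z, hz⟩ := exists_complex_root ξ hd1
      have him : z.im ≠ 0 := by
        intro h
        apply hroot z.re
        have : Polynomial.aeval z ξ = 0 := by rw [aeval_def, ← eval_map]; exact hz
        have hz' : z = (z.re : ℂ) := by
          exact Complex.ext rfl (by simp [h])
        rw [hz'] at this
        have h2 : ((ξ.eval z.re : ℝ) : ℂ) = 0 := by
          rw [← this]
          simp only [Polynomial.aeval_def]
          exact (Polynomial.eval₂_at_apply (algebraMap ℝ ℂ) z.re).symm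
        exact_mod_cast h2
      set η := ξ /ₘ quadP z.re (z.im ^ 2) with hη
      have hfac := quad_factor ξ z hz him
      rw [← hη] at hfac
      have hQpos : ∀ t, 0 < (quadP z.re (z.im ^ 2)).eval t := by
        intro t; rw [quadP_eval]
        have : 0 < z.im ^ 2 := by positivity
        positivity
      have hev : ∀ t, ξ.eval t = ((t - z.re) ^ 2 + z.im ^ 2) * η.eval t := by
        intro t; conv_lhs => rw [← hfac]
        rw [eval_mul, quadP_eval]
      have hηnn : ∀ t, 0 ≤ η.eval t := by
        intro t
        have := hnn t
        rw [hev t] at this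
        refine nonneg_of_mul_nonneg_right this ?_
        have h2 : 0 < z.im ^ 2 := by positivity
        positivity
      have hηne : η ≠ 0 := by
        intro h; rw [h, mul_zero] at hfac; exact hξne hfac.symm
      have hdd : η.natDegree = ξ.natDegree - 2 := natDegree_divByMonic_quad ξ _ _
      obtain ⟨p, q, hp, hq, hpq⟩ := IH (d - 2) (by omega) η (by omega) hηnn
      refine ⟨(X - C z.re) * p - C z.im * q, (X - C z.re) * q + C z.im * p, ?_, ?_, fun t => ?_⟩
      · refine le_trans (natDegree_sub_le _ _) ?_
        simp only [max_le_iff]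
        constructor
        · refine le_trans natDegree_mul_le ?_
          rw [natDegree_X_sub_C]; omega
        · refine le_trans natDegree_mul_le ?_
          rw [natDegree_C]; omega
      · refine le_trans (natDegree_add_le _ _) ?_
        simp only [max_le_iff]
        constructor
        · refine le_trans natDegree_mul_le ?_
          rw [natDegree_X_sub_C]; omega
        · refine le_trans natDegree_mul_le ?_
          rw [natDegree_C]; omega
      · rw [hev t, hpq t]; simp; ring


lemma natDegree_bX (b : ℝ) : (C b - X : Polynomial ℝ).natDegree = 1 := by
  rw [show (C b - X : Polynomial ℝ) = -(X - C b) by ring, natDegree_neg, natDegree_X_sub_C]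

lemma nd_sqmul_a (a : ℝ) (σ : Polynomial ℝ) :
    ((X - C a) ^ 2 * σ).natDegree ≤ 2 + σ.natDegree := by
  refine le_trans natDegree_mul_le ?_
  rw [natDegree_pow, natDegree_X_sub_C]

lemma nd_sqmul_b (b : ℝ) (σ : Polynomial ℝ) :
    ((C b - X) ^ 2 * σ).natDegree ≤ 2 + σ.natDegree := by
  refine le_trans natDegree_mul_le ?_
  rw [natDegree_pow, natDegree_bX]

lemma key (a b : ℝ) (hab : a < b) :
    ∀ d : ℕ, ∀ ξ : Polynomial ℝ, ξ.natDegree ≤ d → (∀ t ∈ Set.Icc a b, 0 ≤ ξ.eval t) →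
    ((∃ σ0 σ1 : Polynomial ℝ, (∀ t, 0 ≤ σ0.eval t) ∧ (∀ t, 0 ≤ σ1.eval t) ∧
       σ0.natDegree ≤ 2 * ((d + 1) / 2) ∧
       (σ1 = 0 ∨ σ1.natDegree + 2 ≤ 2 * ((d + 1) / 2)) ∧
       ∀ t, ξ.eval t = σ0.eval t + (b - t) * (t - a) * σ1.eval t) ∧
     (∃ τ0 τ1 : Polynomial ℝ, (∀ t, 0 ≤ τ0.eval t) ∧ (∀ t, 0 ≤ τ1.eval t) ∧
       τ0.natDegree ≤ 2 * (d / 2) ∧ τ1.natDegree ≤ 2 * (d / 2) ∧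
       ∀ t, ξ.eval t = (t - a) * τ0.eval t + (b - t) * τ1.eval t)) := by
  have hba : b - a ≠ 0 := by linarith
  intro d
  induction d using Nat.strong_induction_on with
  | _ d IH =>
  intro ξ hdeg hnn
  by_cases h0 : ξ.natDegree = 0
  · -- constant case
    have hc := eq_C_of_natDegree_eq_zero h0
    have hcnn : 0 ≤ ξ.coeff 0 := by
      have := hnn a ⟨le_refl a, le_of_lt hab⟩
      rw [hc] at this; simpa using this
    constructor
    · exact ⟨ξ, 0, fun t => by rw [hc]; simpa using hcnn, fun t => by simp,
        by omega, Or.inl rfl, fun t => by simp⟩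
    · refine ⟨C (ξ.coeff 0 / (b - a)), C (ξ.coeff 0 / (b - a)),
        fun t => by simp only [eval_C]; exact div_nonneg hcnn (by linarith),
        fun t => by simp only [eval_C]; exact div_nonneg hcnn (by linarith), by simp, by simp,
        fun t => ?_⟩
      rw [hc]; simp; field_simp; ring
  · have hd1 : 1 ≤ ξ.natDegree := by omega
    have hd1' : 1 ≤ d := le_trans hd1 hdeg
    have hξne : ξ ≠ 0 := fun h => h0 (by simp [h])
    by_cases hroot : ∃ t0 ∈ Set.Icc a b, ξ.eval t0 = 0
    · obtain ⟨t0, ht0m, ht0⟩ := hroot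
      rcases eq_or_ne a t0 with heq | hta
      · -- root at a
        subst heq
        set η := ξ /ₘ (X - C a) with hη
        have hfac := factor_root ξ a ht0
        rw [← hη] at hfac
        have hev : ∀ t, ξ.eval t = (t - a) * η.eval t := by
          intro t; conv_lhs => rw [← hfac]; simp
        have hηd : η.natDegree ≤ d - 1 := by
          rw [hη, natDegree_divByMonic_linear]; omega
        have hηnn : ∀ t ∈ Set.Icc a b, 0 ≤ η.eval t := by
          intro t ht
          rcases eq_or_lt_of_le ht.1 with rfl | hlt
          · exact right_lim_nonneg η hab (fun s h1 h2 => by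
              have := hnn s ⟨le_of_lt h1, le_of_lt h2⟩
              rw [hev s] at this
              exact nonneg_of_mul_nonneg_right this (by linarith))
          · have := hnn t ht
            rw [hev t] at this
            exact nonneg_of_mul_nonneg_right this (by linarith)
        obtain ⟨⟨σ0, σ1, hσ0nn, hσ1nn, hσ0d, hσ1d, hσev⟩,
                ⟨τ0, τ1, hτ0nn, hτ1nn, hτ0d, hτ1d, hτev⟩⟩ :=
          IH (d - 1) (by omega) η hηd hηnn
        constructor
        · refine ⟨(X - C a) ^ 2 * τ0, τ1, ?_, hτ1nn, ?_, ?_, fun t => ?_⟩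
          · intro t; simp only [eval_mul, eval_pow, eval_sub, eval_X, eval_C]
            exact mul_nonneg (sq_nonneg _) (hτ0nn t)
          · refine le_trans (nd_sqmul_a a τ0) ?_; omega
          · right; omega
          · rw [hev t, hτev t]
            simp only [eval_mul, eval_pow, eval_sub, eval_X, eval_C]
            ring
        · refine ⟨σ0, (X - C a) ^ 2 * σ1, hσ0nn, ?_, ?_, ?_, fun t => ?_⟩
          · intro t; simp only [eval_mul, eval_pow, eval_sub, eval_X, eval_C]
            exact mul_nonneg (sq_nonneg _) (hσ1nn t)
          · omega
          · rcases hσ1d with h | h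
            · rw [h, mul_zero]; simp
            · refine le_trans (nd_sqmul_a a σ1) ?_; omega
          · rw [hev t, hσev t]
            simp only [eval_mul, eval_pow, eval_sub, eval_X, eval_C]
            ring
      · rcases eq_or_ne b t0 with heq | htb
        · -- root at b
          subst heq
          set ζ := -(ξ /ₘ (X - C b)) with hζ
          have hfac := factor_root ξ b ht0
          have hev : ∀ t, ξ.eval t = (b - t) * ζ.eval t := by
            intro t; conv_lhs => rw [← hfac]
            rw [hζ]; simp; ring
          have hζd : ζ.natDegree ≤ d - 1 := by
            rw [hζ, natDegree_neg, natDegree_divByMonic_linear]; omega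
          have hζnn : ∀ t ∈ Set.Icc a b, 0 ≤ ζ.eval t := by
            intro t ht
            rcases eq_or_lt_of_le ht.2 with rfl | hlt
            · exact left_lim_nonneg ζ hab (fun s h1 h2 => by
                have := hnn s ⟨le_of_lt h1, le_of_lt h2⟩
                rw [hev s] at this
                exact nonneg_of_mul_nonneg_right this (by linarith))
            · have := hnn t ht
              rw [hev t] at this
              exact nonneg_of_mul_nonneg_right this (by linarith)
          obtain ⟨⟨σ0, σ1, hσ0nn, hσ1nn, hσ0d, hσ1d, hσev⟩,
                  ⟨τ0, τ1, hτ0nn, hτ1nn, hτ0d, hτ1d, hτev⟩⟩ :=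
            IH (d - 1) (by omega) ζ hζd hζnn
          constructor
          · refine ⟨(C b - X) ^ 2 * τ1, τ0, ?_, hτ0nn, ?_, ?_, fun t => ?_⟩
            · intro t; simp only [eval_mul, eval_pow, eval_sub, eval_X, eval_C]
              exact mul_nonneg (sq_nonneg _) (hτ1nn t)
            · refine le_trans (nd_sqmul_b b τ1) ?_; omega
            · right; omega
            · rw [hev t, hτev t]
              simp only [eval_mul, eval_pow, eval_sub, eval_X, eval_C]
              ring
          · refine ⟨(C b - X) ^ 2 * σ1, σ0, ?_, hσ0nn, ?_, ?_, fun t => ?_⟩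
            · intro t; simp only [eval_mul, eval_pow, eval_sub, eval_X, eval_C]
              exact mul_nonneg (sq_nonneg _) (hσ1nn t)
            · rcases hσ1d with h | h
              · rw [h, mul_zero]; simp
              · refine le_trans (nd_sqmul_b b σ1) ?_; omega
            · omega
            · rw [hev t, hσev t]
              simp only [eval_mul, eval_pow, eval_sub, eval_X, eval_C]
              ring
        · -- interior root
          have hta' : a < t0 := lt_of_le_of_ne ht0m.1 hta
          have htb' : t0 < b := lt_of_le_of_ne ht0m.2 (Ne.symm htb)
          obtain ⟨η, hηdeg, hfac, hηt0⟩ := double_root ξ hta' htb'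
            (fun t h1 h2 => hnn t ⟨le_of_lt h1, le_of_lt h2⟩) ht0
          have hev : ∀ t, ξ.eval t = (t - t0) ^ 2 * η.eval t := by
            intro t; conv_lhs => rw [← hfac]; simp
          have hηne : η ≠ 0 := by
            intro h; rw [h, mul_zero] at hfac; exact hξne hfac.symm
          have hdd : ξ.natDegree = 2 + η.natDegree := by
            rw [← hfac, natDegree_mul (pow_ne_zero 2 (X_sub_C_ne_zero t0)) hηne,
              natDegree_pow, natDegree_X_sub_C]
          have hd2 : 2 ≤ d := by omega
          have hηnn : ∀ t ∈ Set.Icc a b, 0 ≤ η.eval t := by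
            intro t ht
            rcases eq_or_ne t t0 with rfl | hne
            · exact hηt0
            · have := hnn t ht
              rw [hev t] at this
              refine nonneg_of_mul_nonneg_right this ?_
              have : t - t0 ≠ 0 := sub_ne_zero.2 hne
              positivity
          obtain ⟨⟨σ0, σ1, hσ0nn, hσ1nn, hσ0d, hσ1d, hσev⟩,
                  ⟨τ0, τ1, hτ0nn, hτ1nn, hτ0d, hτ1d, hτev⟩⟩ :=
            IH (d - 2) (by omega) η (by omega) hηnn
          constructor
          · refine ⟨(X - C t0) ^ 2 * σ0, (X - C t0) ^ 2 * σ1, ?_, ?_, ?_, ?_, fun t => ?_⟩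
            · intro t; simp only [eval_mul, eval_pow, eval_sub, eval_X, eval_C]
              exact mul_nonneg (sq_nonneg _) (hσ0nn t)
            · intro t; simp only [eval_mul, eval_pow, eval_sub, eval_X, eval_C]
              exact mul_nonneg (sq_nonneg _) (hσ1nn t)
            · refine le_trans (nd_sqmul_a t0 σ0) ?_; omega
            · rcases hσ1d with h | h
              · left; rw [h, mul_zero]
              · right; refine le_trans (Nat.add_le_add_right (nd_sqmul_a t0 σ1) 2) ?_; omega
            · rw [hev t, hσev t]
              simp only [eval_mul, eval_pow, eval_sub, eval_X, eval_C]
              ring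
          · refine ⟨(X - C t0) ^ 2 * τ0, (X - C t0) ^ 2 * τ1, ?_, ?_, ?_, ?_, fun t => ?_⟩
            · intro t; simp only [eval_mul, eval_pow, eval_sub, eval_X, eval_C]
              exact mul_nonneg (sq_nonneg _) (hτ0nn t)
            · intro t; simp only [eval_mul, eval_pow, eval_sub, eval_X, eval_C]
              exact mul_nonneg (sq_nonneg _) (hτ1nn t)
            · refine le_trans (nd_sqmul_a t0 τ0) ?_; omega
            · refine le_trans (nd_sqmul_a t0 τ1) ?_; omega
            · rw [hev t, hτev t]
              simp only [eval_mul, eval_pow, eval_sub, eval_X, eval_C]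
              ring
    · -- no root in [a,b]
      push_neg at hroot
      obtain ⟨z, hz⟩ := exists_complex_root ξ hd1
      by_cases him : z.im = 0
      · -- real root outside [a,b]
        have ht0 : ξ.eval z.re = 0 := by
          have haev : Polynomial.aeval z ξ = 0 := by rw [aeval_def, ← eval_map]; exact hz
          have hz' : z = (z.re : ℂ) := Complex.ext rfl (by simp [him])
          rw [hz'] at haev
          have h2 : ((ξ.eval z.re : ℝ) : ℂ) = 0 := by
            rw [← haev]
            simp only [Polynomial.aeval_def]
            exact (Polynomial.eval₂_at_apply (algebraMap ℝ ℂ) z.re).symm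
          exact_mod_cast h2
        set t0 := z.re with hzre
        have ht0out : t0 < a ∨ b < t0 := by
          by_contra hcon
          push_neg at hcon
          exact hroot t0 ⟨hcon.1, hcon.2⟩ ht0
        set η := ξ /ₘ (X - C t0) with hη
        have hfac := factor_root ξ t0 ht0
        rw [← hη] at hfac
        have hev : ∀ t, ξ.eval t = (t - t0) * η.eval t := by
          intro t; conv_lhs => rw [← hfac]; simp
        have hηd : η.natDegree ≤ d - 1 := by
          rw [hη, natDegree_divByMonic_linear]; omega
        rcases ht0out with hlt | hgt
        · -- t0 < a
          have hηnn : ∀ t ∈ Set.Icc a b, 0 ≤ η.eval t := by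
            intro t ht
            have := hnn t ht
            rw [hev t] at this
            exact nonneg_of_mul_nonneg_right this (by
              have := ht.1; linarith)
          obtain ⟨⟨σ0, σ1, hσ0nn, hσ1nn, hσ0d, hσ1d, hσev⟩,
                  ⟨τ0, τ1, hτ0nn, hτ1nn, hτ0d, hτ1d, hτev⟩⟩ :=
            IH (d - 1) (by omega) η hηd hηnn
          set k := (a - t0) / (b - a) with hkdef
          have hk : a - t0 = k * (b - a) := by rw [hkdef]; field_simp
          have hk0 : 0 ≤ k := by
            rw [hkdef]; apply div_nonneg <;> linarith
          have hsq1a : ((X - C a) ^ 2 * σ1).natDegree ≤ 2 * (d / 2) := by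
            rcases hσ1d with h | h
            · rw [h, mul_zero]; simp
            · exact le_trans (nd_sqmul_a a σ1) (by omega)
          have hsq1b : ((C b - X) ^ 2 * σ1).natDegree ≤ 2 * (d / 2) := by
            rcases hσ1d with h | h
            · rw [h, mul_zero]; simp
            · exact le_trans (nd_sqmul_b b σ1) (by omega)
          constructor
          · refine ⟨(X - C a) ^ 2 * τ0 + C k * ((X - C a) ^ 2 * τ0)
                + C k * ((C b - X) ^ 2 * τ1),
              τ1 + C k * τ0 + C k * τ1, ?_, ?_, ?_, ?_, fun t => ?_⟩
            · intro t
              simp only [eval_add, eval_mul, eval_pow, eval_sub, eval_X, eval_C]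
              have := hτ0nn t; have := hτ1nn t
              positivity
            · intro t
              simp only [eval_add, eval_mul, eval_C]
              have := hτ0nn t; have := hτ1nn t
              positivity
            · refine le_trans (natDegree_add_le _ _) ?_
              refine max_le (le_trans (natDegree_add_le _ _) (max_le ?_ ?_)) ?_
              · exact le_trans (nd_sqmul_a a τ0) (by omega)
              · exact le_trans (natDegree_C_mul_le _ _) (le_trans (nd_sqmul_a a τ0) (by omega))
              · exact le_trans (natDegree_C_mul_le _ _) (le_trans (nd_sqmul_b b τ1) (by omega))
            · right
              have h1 : (τ1 + C k * τ0 + C k * τ1).natDegree ≤ 2 * ((d - 1) / 2) := by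
                refine le_trans (natDegree_add_le _ _) ?_
                refine max_le (le_trans (natDegree_add_le _ _) (max_le ?_ ?_)) ?_
                · omega
                · exact le_trans (natDegree_C_mul_le _ _) (by omega)
                · exact le_trans (natDegree_C_mul_le _ _) (by omega)
              omega
            · rw [hev t, hτev t]
              simp only [eval_add, eval_mul, eval_pow, eval_sub, eval_X, eval_C]
              linear_combination ((t - a) * τ0.eval t + (b - t) * τ1.eval t) * hk
          · refine ⟨σ0 + C k * σ0 + C k * ((C b - X) ^ 2 * σ1),
              (X - C a) ^ 2 * σ1 + C k * σ0 + C k * ((X - C a) ^ 2 * σ1),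
              ?_, ?_, ?_, ?_, fun t => ?_⟩
            · intro t
              simp only [eval_add, eval_mul, eval_pow, eval_sub, eval_X, eval_C]
              have := hσ0nn t; have := hσ1nn t
              positivity
            · intro t
              simp only [eval_add, eval_mul, eval_pow, eval_sub, eval_X, eval_C]
              have := hσ0nn t; have := hσ1nn t
              positivity
            · refine le_trans (natDegree_add_le _ _) ?_
              refine max_le (le_trans (natDegree_add_le _ _) (max_le ?_ ?_)) ?_
              · omega
              · exact le_trans (natDegree_C_mul_le _ _) (by omega)
              · exact le_trans (natDegree_C_mul_le _ _) hsq1b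
            · refine le_trans (natDegree_add_le _ _) ?_
              refine max_le (le_trans (natDegree_add_le _ _) (max_le ?_ ?_)) ?_
              · exact hsq1a
              · exact le_trans (natDegree_C_mul_le _ _) (by omega)
              · exact le_trans (natDegree_C_mul_le _ _) hsq1a
            · rw [hev t, hσev t]
              simp only [eval_add, eval_mul, eval_pow, eval_sub, eval_X, eval_C]
              linear_combination (σ0.eval t + (b - t) * (t - a) * σ1.eval t) * hk
        · -- b < t0
          have hζev : ∀ t, ξ.eval t = (t0 - t) * (-η).eval t := by
            intro t; rw [hev t]; simp; ring
          have hζd : (-η).natDegree ≤ d - 1 := by rw [natDegree_neg]; exact hηd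
          have hζnn : ∀ t ∈ Set.Icc a b, 0 ≤ (-η).eval t := by
            intro t ht
            have := hnn t ht
            rw [hζev t] at this
            exact nonneg_of_mul_nonneg_right this (by
              have := ht.2; linarith)
          obtain ⟨⟨σ0, σ1, hσ0nn, hσ1nn, hσ0d, hσ1d, hσev⟩,
                  ⟨τ0, τ1, hτ0nn, hτ1nn, hτ0d, hτ1d, hτev⟩⟩ :=
            IH (d - 1) (by omega) (-η) hζd hζnn
          set k := (t0 - b) / (b - a) with hkdef
          have hk : t0 - b = k * (b - a) := by rw [hkdef]; field_simp
          have hk0 : 0 ≤ k := by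
            rw [hkdef]; apply div_nonneg <;> linarith
          have hsq1a : ((X - C a) ^ 2 * σ1).natDegree ≤ 2 * (d / 2) := by
            rcases hσ1d with h | h
            · rw [h, mul_zero]; simp
            · exact le_trans (nd_sqmul_a a σ1) (by omega)
          have hsq1b : ((C b - X) ^ 2 * σ1).natDegree ≤ 2 * (d / 2) := by
            rcases hσ1d with h | h
            · rw [h, mul_zero]; simp
            · exact le_trans (nd_sqmul_b b σ1) (by omega)
          constructor
          · refine ⟨(C b - X) ^ 2 * τ1 + C k * ((X - C a) ^ 2 * τ0)
                + C k * ((C b - X) ^ 2 * τ1),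
              τ0 + C k * τ0 + C k * τ1, ?_, ?_, ?_, ?_, fun t => ?_⟩
            · intro t
              simp only [eval_add, eval_mul, eval_pow, eval_sub, eval_X, eval_C]
              have := hτ0nn t; have := hτ1nn t
              positivity
            · intro t
              simp only [eval_add, eval_mul, eval_C]
              have := hτ0nn t; have := hτ1nn t
              positivity
            · refine le_trans (natDegree_add_le _ _) ?_
              refine max_le (le_trans (natDegree_add_le _ _) (max_le ?_ ?_)) ?_
              · exact le_trans (nd_sqmul_b b τ1) (by omega)
              · exact le_trans (natDegree_C_mul_le _ _) (le_trans (nd_sqmul_a a τ0) (by omega))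
              · exact le_trans (natDegree_C_mul_le _ _) (le_trans (nd_sqmul_b b τ1) (by omega))
            · right
              have h1 : (τ0 + C k * τ0 + C k * τ1).natDegree ≤ 2 * ((d - 1) / 2) := by
                refine le_trans (natDegree_add_le _ _) ?_
                refine max_le (le_trans (natDegree_add_le _ _) (max_le ?_ ?_)) ?_
                · omega
                · exact le_trans (natDegree_C_mul_le _ _) (by omega)
                · exact le_trans (natDegree_C_mul_le _ _) (by omega)
              omega
            · rw [hζev t, hτev t]
              simp only [eval_add, eval_mul, eval_pow, eval_sub, eval_X, eval_C]
              linear_combination ((t - a) * τ0.eval t + (b - t) * τ1.eval t) * hk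
          · refine ⟨(C b - X) ^ 2 * σ1 + C k * σ0 + C k * ((C b - X) ^ 2 * σ1),
              σ0 + C k * σ0 + C k * ((X - C a) ^ 2 * σ1),
              ?_, ?_, ?_, ?_, fun t => ?_⟩
            · intro t
              simp only [eval_add, eval_mul, eval_pow, eval_sub, eval_X, eval_C]
              have := hσ0nn t; have := hσ1nn t
              positivity
            · intro t
              simp only [eval_add, eval_mul, eval_pow, eval_sub, eval_X, eval_C]
              have := hσ0nn t; have := hσ1nn t
              positivity
            · refine le_trans (natDegree_add_le _ _) ?_
              refine max_le (le_trans (natDegree_add_le _ _) (max_le ?_ ?_)) ?_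
              · exact hsq1b
              · exact le_trans (natDegree_C_mul_le _ _) (by omega)
              · exact le_trans (natDegree_C_mul_le _ _) hsq1b
            · refine le_trans (natDegree_add_le _ _) ?_
              refine max_le (le_trans (natDegree_add_le _ _) (max_le ?_ ?_)) ?_
              · omega
              · exact le_trans (natDegree_C_mul_le _ _) (by omega)
              · exact le_trans (natDegree_C_mul_le _ _) hsq1a
            · rw [hζev t, hσev t]
              simp only [eval_add, eval_mul, eval_pow, eval_sub, eval_X, eval_C]
              linear_combination (σ0.eval t + (b - t) * (t - a) * σ1.eval t) * hk
      · -- nonreal root, quadratic factor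
        set η := ξ /ₘ quadP z.re (z.im ^ 2) with hη
        have hfac := quad_factor ξ z hz him
        rw [← hη] at hfac
        have hev : ∀ t, ξ.eval t = ((t - z.re) ^ 2 + z.im ^ 2) * η.eval t := by
          intro t; conv_lhs => rw [← hfac]
          rw [eval_mul, quadP_eval]
        have hηne : η ≠ 0 := by
          intro h; rw [h, mul_zero] at hfac; exact hξne hfac.symm
        have hdd : ξ.natDegree = 2 + η.natDegree := by
          rw [← hfac, natDegree_mul (quadP_ne_zero _ _) hηne, quadP_natDegree]
        have hd2 : 2 ≤ d := by omega
        have hQnn : ∀ (σ : Polynomial ℝ), (∀ t, 0 ≤ σ.eval t) →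
            ∀ t, 0 ≤ (quadP z.re (z.im ^ 2) * σ).eval t := by
          intro σ hσ t
          rw [eval_mul, quadP_eval]
          have h2 : 0 < z.im ^ 2 := by positivity
          exact mul_nonneg (by positivity) (hσ t)
        have hQd : ∀ (σ : Polynomial ℝ), (quadP z.re (z.im ^ 2) * σ).natDegree ≤ 2 + σ.natDegree := by
          intro σ
          refine le_trans natDegree_mul_le ?_
          rw [quadP_natDegree]
        have hηnn : ∀ t ∈ Set.Icc a b, 0 ≤ η.eval t := by
          intro t ht
          have := hnn t ht
          rw [hev t] at this
          refine nonneg_of_mul_nonneg_right this ?_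
          have h2 : 0 < z.im ^ 2 := by positivity
          positivity
        obtain ⟨⟨σ0, σ1, hσ0nn, hσ1nn, hσ0d, hσ1d, hσev⟩,
                ⟨τ0, τ1, hτ0nn, hτ1nn, hτ0d, hτ1d, hτev⟩⟩ :=
          IH (d - 2) (by omega) η (by omega) hηnn
        constructor
        · refine ⟨quadP z.re (z.im ^ 2) * σ0, quadP z.re (z.im ^ 2) * σ1,
            hQnn σ0 hσ0nn, hQnn σ1 hσ1nn, ?_, ?_, fun t => ?_⟩
          · refine le_trans (hQd σ0) ?_; omega
          · rcases hσ1d with h | h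
            · left; rw [h, mul_zero]
            · right; refine le_trans (Nat.add_le_add_right (hQd σ1) 2) ?_; omega
          · rw [hev t, hσev t, eval_mul, eval_mul, quadP_eval]
            ring
        · refine ⟨quadP z.re (z.im ^ 2) * τ0, quadP z.re (z.im ^ 2) * τ1,
            hQnn τ0 hτ0nn, hQnn τ1 hτ1nn, ?_, ?_, fun t => ?_⟩
          · refine le_trans (hQd τ0) ?_; omega
          · refine le_trans (hQd τ1) ?_; omega
          · rw [hev t, eval_mul, eval_mul, quadP_eval, hτev t]
            ring



/-- (Lukács/Markov, even degree) A real polynomial of degree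
≤ 2n is nonnegative on [a,b] iff ξ(t) = f(t) + (b-t)(t-a)·g(t) with f a sum of
two squares of degree-≤n polynomials and g a sum of two squares of
degree-≤(n-1) polynomials. -/
theorem nonneg_interval_even (n : ℕ) (a b : ℝ) (hab : a < b) (ξ : Polynomial ℝ)
    (hdeg : ξ.natDegree ≤ 2 * n) :
    (∀ t ∈ Set.Icc a b, 0 ≤ ξ.eval t) ↔
      ∃ p q r s : Polynomial ℝ,
        p.natDegree ≤ n ∧ q.natDegree ≤ n ∧
        r.natDegree ≤ n - 1 ∧ s.natDegree ≤ n - 1 ∧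
        ∀ t : ℝ, ξ.eval t =
          ((p.eval t) ^ 2 + (q.eval t) ^ 2) +
            (b - t) * (t - a) * ((r.eval t) ^ 2 + (s.eval t) ^ 2) := by
  constructor
  · intro hnn
    obtain ⟨⟨σ0, σ1, hσ0nn, hσ1nn, hσ0d, hσ1d, hσev⟩, -⟩ :=
      key a b hab (2 * n) ξ hdeg hnn
    obtain ⟨p, q, hpd, hqd, hpq⟩ := two_squares (2 * n) σ0 (by omega) hσ0nn
    rcases hσ1d with h1 | h1
    · refine ⟨p, q, 0, 0, by omega, by omega, by simp, by simp, fun t => ?_⟩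
      rw [hσev t, hpq t, h1]
      simp
    · have hn1 : 1 ≤ n := by omega
      obtain ⟨r, s, hrd, hsd, hrs⟩ := two_squares (2 * (n - 1)) σ1 (by omega) hσ1nn
      refine ⟨p, q, r, s, by omega, by omega, by omega, by omega, fun t => ?_⟩
      rw [hσev t, hpq t, hrs t]
  · rintro ⟨p, q, r, s, -, -, -, -, hev⟩ t ht
    rw [hev t]
    have h1 : 0 ≤ (b - t) * (t - a) := mul_nonneg (by linarith [ht.2]) (by linarith [ht.1])
    positivity
end
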